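/- arXiv:math/0602098 — 2 statements merged into one kernel-verified Lean document; each statement's English description precedes it below -/
import Mathlib

section
/- Suppose α : ℤ^d → (0,1) is such that ν_α is stationary for the translation-invariant exclusion process on ℤ^d, and u₁, …, u_k ∈ ℤ^d satisfy p(u_i) > 0 for 1 ≤ i ≤ k. For each i set λ_i = p(u_i)/p(−u_i) if p(−u_i) > 0, and λ_i = 1 if p(−u_i) = 0. Then there exist ρ₁, …, ρ_k with ρ_i ∈ {λ_i, 1} for each i, such that π(n₁u₁ + ⋯ + n_k u_k) = π(0)·ρ₁^{n₁}⋯ρ_k^{n_k} for all integers n₁, …, n_k. -/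
open MeasureTheory Filter Topology

namespace ExclusionPaper

abbrev Zd (d : ℕ) := Fin d → ℤ

abbrev Conf (d : ℕ) := Zd d → Bool

noncomputable def ind (b : Bool) : ℝ := if b then 1 else 0

def swap {d : ℕ} (η : Conf d) (x y : Zd d) : Conf d :=
  fun z => if z = x then η y else if z = y then η x else η z

def IsCylinder {d : ℕ} (f : Conf d → ℝ) : Prop :=
  ∃ F : Finset (Zd d), ∀ η η' : Conf d, (∀ x ∈ F, η x = η' x) → f η = f η'

noncomputable def gen {d : ℕ} (p : Zd d → ℝ) (f : Conf d → ℝ) (η : Conf d) : ℝ :=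
  ∑' x : Zd d, ∑' y : Zd d,
    p (y - x) * ind (η x) * (1 - ind (η y)) * (f (swap η x y) - f η)

def IsStationary {d : ℕ} (p : Zd d → ℝ) (μ : Measure (Conf d)) : Prop :=
  ∀ f : Conf d → ℝ, IsCylinder f → ∫ η, gen p f η ∂μ = 0

def IsProductWith {d : ℕ} (α : Zd d → ℝ) (μ : Measure (Conf d)) : Prop :=
  IsProbabilityMeasure μ ∧
  ∀ F : Finset (Zd d), ∀ b : Zd d → Bool,
    μ {η : Conf d | ∀ x ∈ F, η x = b x} =
      ∏ x ∈ F, ENNReal.ofReal (if b x then α x else 1 - α x)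

noncomputable def pifun {d : ℕ} (α : Zd d → ℝ) (x : Zd d) : ℝ := α x / (1 - α x)

def innerZ {d : ℕ} (x y : Zd d) : ℤ := ∑ i, x i * y i

noncomputable def innerR {d : ℕ} (x : Zd d) (v : Fin d → ℝ) : ℝ := ∑ i, (x i : ℝ) * v i

/-! ### Auxiliary development -/

section Aux

variable {d : ℕ}

lemma ind_nonneg (b : Bool) : 0 ≤ ind b := by cases b <;> simp [ind]

lemma ind_le_one (b : Bool) : ind b ≤ 1 := by cases b <;> simp [ind]

lemma ind_mul_compl (b : Bool) : ind b * (1 - ind b) = 0 := by cases b <;> simp [ind]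

lemma measurable_ind (a : Zd d) : Measurable fun η : Conf d => ind (η a) :=
  (Measurable.of_discrete (f := ind)).comp (measurable_pi_apply a)

variable {p : Zd d → ℝ}

lemma summable_p (hp1 : ∑' z : Zd d, p z = 1) : Summable p := by
  by_contra h
  rw [tsum_eq_zero_of_not_summable h] at hp1
  norm_num at hp1

lemma summable_sub (hp : Summable p) (a : Zd d) : Summable fun z : Zd d => p (z - a) :=
  (Equiv.subRight a).summable_iff.mpr hp

lemma summable_sub' (hp : Summable p) (a : Zd d) : Summable fun z : Zd d => p (a - z) :=
  (Equiv.subLeft a).summable_iff.mpr hp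

lemma summable_of_abs_le {f g : Zd d → ℝ} (hg : Summable g) (h : ∀ x, |f x| ≤ g x) :
    Summable f :=
  Summable.of_norm_bounded hg (by simpa [Real.norm_eq_abs] using h)

-- tsum utilities
lemma summable_single (a : Zd d) (A : ℝ) : Summable fun x : Zd d => if x = a then A else 0 :=
  (hasSum_ite_eq a A).summable

lemma summable_erase {f : Zd d → ℝ} (hf : Summable f) (a : Zd d) :
    Summable fun x => if x = a then 0 else f x := by
  have h : (fun x => if x = a then 0 else f x) = fun x => f x - (if x = a then f a else 0) := by
    funext x; by_cases hx : x = a <;> simp [hx]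
  rw [h]
  exact hf.sub (summable_single a (f a))

lemma tsum_erase {f : Zd d → ℝ} (hf : Summable f) (a : Zd d) :
    ∑' x, (if x = a then 0 else f x) = (∑' x, f x) - f a := by
  have := Summable.tsum_eq_add_tsum_ite hf a
  linarith

lemma summable_update {f : Zd d → ℝ} (hf : Summable f) (a : Zd d) (A : ℝ) :
    Summable fun x => if x = a then A else f x := by
  have h : (fun x => if x = a then A else f x)
      = fun x => (if x = a then A - f a else 0) + f x := by
    funext x; by_cases hx : x = a <;> simp [hx]
  rw [h]
  exact (summable_single a (A - f a)).add hf

lemma tsum_update {f : Zd d → ℝ} (hf : Summable f) (a : Zd d) (A : ℝ) :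
    ∑' x, (if x = a then A else f x) = A + ∑' x, (if x = a then 0 else f x) := by
  have hg := summable_update hf a A
  have h := Summable.tsum_eq_add_tsum_ite hg a
  have h2 : (fun x => if x = a then 0 else if x = a then A else f x)
      = fun x => if x = a then 0 else f x := by
    funext x; by_cases hx : x = a <;> simp [hx]
  simp only [if_pos, if_true] at h
  rw [h2] at h
  simpa using h

lemma tsum_pair {a b : Zd d} (hab : a ≠ b) (A B : ℝ) :
    ∑' x, (if x = a then A else if x = b then B else 0) = A + B := by
  have h1 : (fun x : Zd d => if x = a then A else if x = b then B else 0)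
      = (fun x => if x = a then A else 0) + fun x => if x = b then B else 0 := by
    funext x
    by_cases hxa : x = a
    · subst hxa; simp [hab]
    · by_cases hxb : x = b <;> simp [hxa, hxb, Ne.symm hab]
  calc ∑' x, (if x = a then A else if x = b then B else 0)
      = ∑' x, ((if x = a then A else 0) + if x = b then B else 0) := by
        exact tsum_congr fun x => congrFun h1 x
    _ = A + B := by
        rw [Summable.tsum_add (summable_single a A) (summable_single b B), tsum_ite_eq, tsum_ite_eq]

end Aux

section Moments

variable {d : ℕ} {α : Zd d → ℝ} {μ : Measure (Conf d)}

lemma meas_cyl (F : Finset (Zd d)) (b : Zd d → Bool) :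
    MeasurableSet {η : Conf d | ∀ x ∈ F, η x = b x} := by
  have h : {η : Conf d | ∀ x ∈ F, η x = b x} = ⋂ x ∈ F, {η : Conf d | η x = b x} := by
    ext η; simp
  rw [h]
  refine MeasurableSet.biInter F.countable_toSet fun x _ => ?_
  have hms : MeasurableSet ({b x} : Set Bool) := MeasurableSet.of_discrete
  have hpre : MeasurableSet ((fun η : Conf d => η x) ⁻¹' {b x}) := (measurable_pi_apply x) hms
  exact hpre

lemma measure_pair (hμ : IsProductWith α μ) {a b : Zd d} (hab : a ≠ b) :
    μ {η : Conf d | η a = true ∧ η b = false}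
      = ENNReal.ofReal (α a) * ENNReal.ofReal (1 - α b) := by
  classical
  have h := hμ.2 {a, b} (fun z => decide (z = a))
  have hset : {η : Conf d | ∀ x ∈ ({a, b} : Finset (Zd d)), η x = decide (x = a)}
      = {η : Conf d | η a = true ∧ η b = false} := by
    ext η
    constructor
    · intro hc
      refine ⟨?_, ?_⟩
      · have := hc a (by simp); simpa using this
      · have := hc b (by simp); simpa [Ne.symm hab] using this
    · rintro ⟨h1, h2⟩ x hx
      rcases Finset.mem_insert.1 hx with hx | hx
      · subst hx; simpa using h1
      · have : x = b := by simpa using hx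
        subst this; simpa [Ne.symm hab] using h2
  rw [hset] at h
  rw [h, Finset.prod_pair hab]
  simp [Ne.symm hab]

lemma measure_triple (hμ : IsProductWith α μ) {a b c : Zd d}
    (hab : a ≠ b) (hac : a ≠ c) (hbc : b ≠ c) :
    μ {η : Conf d | η a = true ∧ η b = true ∧ η c = false}
      = ENNReal.ofReal (α a) * (ENNReal.ofReal (α b) * ENNReal.ofReal (1 - α c)) := by
  classical
  have h := hμ.2 {a, b, c} (fun z => decide (z ≠ c))
  have hset : {η : Conf d | ∀ x ∈ ({a, b, c} : Finset (Zd d)), η x = decide (x ≠ c)}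
      = {η : Conf d | η a = true ∧ η b = true ∧ η c = false} := by
    ext η
    constructor
    · intro hc'
      refine ⟨?_, ?_, ?_⟩
      · have := hc' a (by simp); simpa [hac] using this
      · have := hc' b (by simp); simpa [hbc] using this
      · have := hc' c (by simp); simpa using this
    · rintro ⟨h1, h2, h3⟩ x hx
      simp only [Finset.mem_insert, Finset.mem_singleton] at hx
      rcases hx with hx | hx | hx
      · subst hx; simpa [hac] using h1
      · subst hx; simpa [hbc] using h2
      · subst hx; simpa using h3
  rw [hset] at h
  have hanotin : a ∉ ({b, c} : Finset (Zd d)) := by simp [hab, hac]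
  rw [h, Finset.prod_insert hanotin, Finset.prod_pair hbc]
  simp [hac, hbc]

lemma integrable_bdd (hprob : IsProbabilityMeasure μ) {f : Conf d → ℝ}
    (hm : Measurable f) (C : ℝ) (hC : ∀ η, |f η| ≤ C) : Integrable f μ :=
  (integrable_const C).mono' hm.aestronglyMeasurable
    (Filter.Eventually.of_forall (by simpa [Real.norm_eq_abs] using hC))

lemma moment2 (hα : ∀ x, α x ∈ Set.Ioo (0:ℝ) 1) (hμ : IsProductWith α μ)
    {a b : Zd d} (hab : a ≠ b) :
    ∫ η, ind (η a) * (1 - ind (η b)) ∂μ = α a * (1 - α b) := by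
  classical
  set S : Set (Conf d) := {η | η a = true ∧ η b = false} with hS
  have hSm : MeasurableSet S := by
    have : S = {η : Conf d | ∀ x ∈ ({a, b} : Finset (Zd d)), η x = (fun z => decide (z = a)) x} := by
      ext η
      constructor
      · rintro ⟨h1, h2⟩ x hx
        rcases Finset.mem_insert.1 hx with hx | hx
        · subst hx; simpa using h1
        · have : x = b := by simpa using hx
          subst this; simpa [Ne.symm hab] using h2
      · intro hc
        refine ⟨?_, ?_⟩
        · have := hc a (by simp); simpa using this
        · have := hc b (by simp); simpa [Ne.symm hab] using this
    rw [this]; exact meas_cyl _ _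
  have hfun : (fun η : Conf d => ind (η a) * (1 - ind (η b)))
      = S.indicator (1 : Conf d → ℝ) := by
    funext η
    by_cases hmem : η ∈ S
    · rw [Set.indicator_of_mem hmem]
      obtain ⟨h1, h2⟩ := hmem
      simp [h1, h2, ind]
    · rw [Set.indicator_of_notMem hmem]
      rw [hS] at hmem
      simp only [Set.mem_setOf_eq, not_and] at hmem
      cases h1 : η a with
      | false => simp [ind, h1]
      | true =>
        have h2 := hmem h1
        have : η b = true := by
          cases h2' : η b with
          | false => exact absurd h2' h2
          | true => rfl
        simp [ind, this]
  rw [hfun, integral_indicator_one hSm, measureReal_def, measure_pair hμ hab]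
  have h1 : (0:ℝ) ≤ α a := le_of_lt (hα a).1
  have h2 : (0:ℝ) ≤ 1 - α b := by have := (hα b).2; linarith
  rw [ENNReal.toReal_mul, ENNReal.toReal_ofReal h1, ENNReal.toReal_ofReal h2]

lemma moment3 (hα : ∀ x, α x ∈ Set.Ioo (0:ℝ) 1) (hμ : IsProductWith α μ)
    {a b c : Zd d} (hab : a ≠ b) (hac : a ≠ c) (hbc : b ≠ c) :
    ∫ η, ind (η a) * ind (η b) * (1 - ind (η c)) ∂μ = α a * α b * (1 - α c) := by
  classical
  set S : Set (Conf d) := {η | η a = true ∧ η b = true ∧ η c = false} with hS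
  have hSm : MeasurableSet S := by
    have hmt : MeasurableSet ({true} : Set Bool) := MeasurableSet.of_discrete
    have hmf : MeasurableSet ({false} : Set Bool) := MeasurableSet.of_discrete
    have h1' : MeasurableSet ((fun η : Conf d => η a) ⁻¹' {true}) := (measurable_pi_apply a) hmt
    have h2' : MeasurableSet ((fun η : Conf d => η b) ⁻¹' {true}) := (measurable_pi_apply b) hmt
    have h3' : MeasurableSet ((fun η : Conf d => η c) ⁻¹' {false}) := (measurable_pi_apply c) hmf
    have h1 : MeasurableSet {η : Conf d | η a = true} := h1'
    have h2 : MeasurableSet {η : Conf d | η b = true} := h2'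
    have h3 : MeasurableSet {η : Conf d | η c = false} := h3' 
    exact h1.inter (h2.inter h3)
  have hfun : (fun η : Conf d => ind (η a) * ind (η b) * (1 - ind (η c)))
      = S.indicator (1 : Conf d → ℝ) := by
    funext η
    by_cases hmem : η ∈ S
    · rw [Set.indicator_of_mem hmem]
      obtain ⟨h1, h2, h3⟩ := hmem
      simp [h1, h2, h3, ind]
    · rw [Set.indicator_of_notMem hmem]
      rw [hS] at hmem
      simp only [Set.mem_setOf_eq, not_and] at hmem
      cases h1 : η a with
      | false => simp [ind, h1]
      | true =>
        cases h2 : η b with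
        | false => simp [ind, h2]
        | true =>
          have h3 := hmem h1 h2
          have : η c = true := by
            cases h3' : η c with
            | false => exact absurd h3' h3
            | true => rfl
          simp [ind, this]
  rw [hfun, integral_indicator_one hSm, measureReal_def, measure_triple hμ hab hac hbc]
  have h1 : (0:ℝ) ≤ α a := le_of_lt (hα a).1
  have h2 : (0:ℝ) ≤ α b := le_of_lt (hα b).1
  have h3 : (0:ℝ) ≤ 1 - α c := by have := (hα c).2; linarith
  rw [ENNReal.toReal_mul, ENNReal.toReal_mul, ENNReal.toReal_ofReal h1,
    ENNReal.toReal_ofReal h2, ENNReal.toReal_ofReal h3]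
  ring

end Moments

section Station

open scoped ENNReal NNReal

variable {d : ℕ} {p : Zd d → ℝ} {α : Zd d → ℝ} {μ : Measure (Conf d)}

lemma habs_unit (c : ℝ) (s t : Bool) (hc : 0 ≤ c) : |c * (ind s * (1 - ind t))| ≤ c := by
  cases s <;> cases t <;> simp [ind, abs_of_nonneg hc, hc]

/-- summand family for the one-point function -/
noncomputable def GA (p : Zd d → ℝ) (a : Zd d) (η : Conf d) (x : Zd d) : ℝ :=
  if x = a then 0 else
    p (a - x) * (ind (η x) * (1 - ind (η a))) - p (x - a) * (ind (η a) * (1 - ind (η x)))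

lemma gen_fa (hp0 : ∀ z, 0 ≤ p z) (hp : Summable p) (a : Zd d) (η : Conf d) :
    gen p (fun η => ind (η a)) η = ∑' x, GA p a η x := by
  classical
  have hsub : Summable fun x : Zd d => p (x - a) := summable_sub hp a
  have hsub' : Summable fun x : Zd d => p (a - x) := summable_sub' hp a
  have hS : Summable fun y : Zd d => p (y - a) * (1 - ind (η y)) := by
    refine summable_of_abs_le hsub fun y => ?_
    have h : p (y - a) * (1 - ind (η y)) = p (y - a) * (ind true * (1 - ind (η y))) := by
      simp [ind]
    rw [h]; exact habs_unit _ _ _ (hp0 _)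
  have hg : Summable fun x : Zd d => p (a - x) * (ind (η x) * (1 - ind (η a))) :=
    summable_of_abs_le hsub' fun x => habs_unit _ _ _ (hp0 _)
  have hg' : Summable fun x : Zd d => p (x - a) * (ind (η a) * (1 - ind (η x))) :=
    summable_of_abs_le hsub fun x => habs_unit _ _ _ (hp0 _)
  have hinner : ∀ x : Zd d,
      (∑' y, p (y - x) * ind (η x) * (1 - ind (η y)) * (ind (swap η x y a) - ind (η a)))
      = if x = a then -(ind (η a) * ∑' y, p (y - a) * (1 - ind (η y)))
        else p (a - x) * (ind (η x) * (1 - ind (η a))) := by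
    intro x
    by_cases hx : x = a
    · subst hx
      rw [if_pos rfl]
      have hptw : ∀ y : Zd d,
          p (y - x) * ind (η x) * (1 - ind (η y)) * (ind (swap η x y x) - ind (η x))
          = -(ind (η x) * (p (y - x) * (1 - ind (η y)))) := by
        intro y
        have hsw : swap η x y x = η y := by simp [swap]
        rw [hsw]
        cases hx1 : η x <;> cases hy1 : η y <;> simp [ind, hx1, hy1] <;> ring
      rw [tsum_congr hptw, tsum_neg, tsum_mul_left]
    · rw [if_neg hx]
      have hptw : ∀ y : Zd d,
          p (y - x) * ind (η x) * (1 - ind (η y)) * (ind (swap η x y a) - ind (η a))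
          = if y = a then p (a - x) * (ind (η x) * (1 - ind (η a))) else 0 := by
        intro y
        by_cases hy : y = a
        · subst hy
          rw [if_pos rfl]
          have hsw : swap η x y y = η x := by simp [swap, Ne.symm hx]
          rw [hsw]
          cases hx1 : η x <;> cases hy1 : η y <;> simp [ind, hx1, hy1] <;> ring
        · rw [if_neg hy]
          have hsw : swap η x y a = η a := by simp [swap, Ne.symm hx, Ne.symm hy]
          rw [hsw]
          simp
      rw [tsum_congr hptw, tsum_ite_eq]
  have hgen : gen p (fun η => ind (η a)) η
      = ∑' x, (if x = a then -(ind (η a) * ∑' y, p (y - a) * (1 - ind (η y)))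
          else p (a - x) * (ind (η x) * (1 - ind (η a)))) := by
    unfold gen
    exact tsum_congr hinner
  rw [hgen, tsum_update hg a]
  have hGA : ∀ x, GA p a η x = (if x = a then 0 else p (a - x) * (ind (η x) * (1 - ind (η a))))
      - (if x = a then 0 else p (x - a) * (ind (η a) * (1 - ind (η x)))) := by
    intro x; unfold GA; by_cases hx : x = a <;> simp [hx]
  rw [tsum_congr hGA, Summable.tsum_sub (summable_erase hg a) (summable_erase hg' a),
    tsum_erase hg a, tsum_erase hg' a]
  have e1 : p (a - a) * (ind (η a) * (1 - ind (η a))) = 0 := by rw [ind_mul_compl]; ring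
  have e3 : (∑' x, p (x - a) * (ind (η a) * (1 - ind (η x))))
      = ind (η a) * ∑' y, p (y - a) * (1 - ind (η y)) := by
    rw [← tsum_mul_left]
    exact tsum_congr fun x => by ring
  rw [e3]
  linarith

lemma star1 (hp0 : ∀ z, 0 ≤ p z) (hp1 : ∑' z : Zd d, p z = 1)
    (hα : ∀ x, α x ∈ Set.Ioo (0:ℝ) 1) (hμ : IsProductWith α μ) (hstat : IsStationary p μ)
    (a : Zd d) :
    ∑' x, (if x = a then 0
      else p (a - x) * (α x * (1 - α a)) - p (x - a) * (α a * (1 - α x))) = 0 := by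
  classical
  haveI := hμ.1
  have hp : Summable p := summable_p hp1
  have hcyl : IsCylinder fun η : Conf d => ind (η a) :=
    ⟨{a}, fun η η' h => by
      show ind (η a) = ind (η' a)
      rw [h a (Finset.mem_singleton_self a)]⟩
  have h0 := hstat _ hcyl
  have hrw : ∫ η, gen p (fun η => ind (η a)) η ∂μ = ∫ η, (∑' x, GA p a η x) ∂μ :=
    integral_congr_ae (Filter.Eventually.of_forall fun η => gen_fa hp0 hp a η)
  rw [hrw] at h0
  have hmeas : ∀ x, Measurable fun η : Conf d => GA p a η x := by
    intro x
    unfold GA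
    by_cases hx : x = a
    · simp only [if_pos hx]; exact measurable_const
    · simp only [if_neg hx]
      exact (measurable_const.mul ((measurable_ind x).mul
          (measurable_const.sub (measurable_ind a)))).sub
        (measurable_const.mul ((measurable_ind a).mul
          (measurable_const.sub (measurable_ind x))))
  have hbd : ∀ x, ∫⁻ η, ‖GA p a η x‖₊ ∂μ ≤ ENNReal.ofReal (p (a - x) + p (x - a)) := by
    intro x
    have hnorm : ∀ η : Conf d, (‖GA p a η x‖₊ : ℝ≥0∞) ≤ ENNReal.ofReal (p (a - x) + p (x - a)) := by
      intro η
      rw [← enorm_eq_nnnorm, ← ofReal_norm_eq_enorm]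
      apply ENNReal.ofReal_le_ofReal
      rw [Real.norm_eq_abs]
      unfold GA
      by_cases hx : x = a
      · rw [if_pos hx, abs_zero]
        have := hp0 (a - x); have := hp0 (x - a); linarith
      · rw [if_neg hx]
        have h1 := habs_unit (p (a - x)) (η x) (η a) (hp0 _)
        have h2 := habs_unit (p (x - a)) (η a) (η x) (hp0 _)
        have h3 := abs_add_le (p (a - x) * (ind (η x) * (1 - ind (η a))))
          (-(p (x - a) * (ind (η a) * (1 - ind (η x)))))
        rw [abs_neg] at h3
        have h4 : p (a - x) * (ind (η x) * (1 - ind (η a)))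
            + -(p (x - a) * (ind (η a) * (1 - ind (η x))))
            = p (a - x) * (ind (η x) * (1 - ind (η a)))
              - p (x - a) * (ind (η a) * (1 - ind (η x))) := by ring
        rw [h4] at h3
        linarith
    calc ∫⁻ η, ‖GA p a η x‖₊ ∂μ
        ≤ ∫⁻ _, ENNReal.ofReal (p (a - x) + p (x - a)) ∂μ := lintegral_mono hnorm
      _ = ENNReal.ofReal (p (a - x) + p (x - a)) := by
          rw [lintegral_const, measure_univ, mul_one]
  have htop : (∑' x, ∫⁻ η, ‖GA p a η x‖₊ ∂μ) ≠ ⊤ := by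
    have hsum : Summable fun x : Zd d => p (a - x) + p (x - a) :=
      (summable_sub' hp a).add (summable_sub hp a)
    have hnn : ∀ x : Zd d, 0 ≤ p (a - x) + p (x - a) := fun x => add_nonneg (hp0 _) (hp0 _)
    have hle : (∑' x, ∫⁻ η, ‖GA p a η x‖₊ ∂μ)
        ≤ ∑' x : Zd d, ENNReal.ofReal (p (a - x) + p (x - a)) := ENNReal.tsum_le_tsum hbd
    refine ne_top_of_le_ne_top ?_ hle
    rw [← ENNReal.ofReal_tsum_of_nonneg hnn hsum]
    exact ENNReal.ofReal_ne_top
  rw [integral_tsum (fun x => (hmeas x).aestronglyMeasurable) htop] at h0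
  calc ∑' x, (if x = a then 0
        else p (a - x) * (α x * (1 - α a)) - p (x - a) * (α a * (1 - α x)))
      = ∑' x, ∫ η, GA p a η x ∂μ := ?_
    _ = 0 := h0
  refine tsum_congr fun x => ?_
  by_cases hx : x = a
  · subst hx; simp [GA]
  · rw [if_neg hx]
    have hint1 : Integrable (fun η : Conf d => ind (η x) * (1 - ind (η a))) μ :=
      integrable_bdd hμ.1 ((measurable_ind x).mul (measurable_const.sub (measurable_ind a))) 1
        (fun η => by cases h1 : η x <;> cases h2 : η a <;> norm_num [ind, h1, h2])
    have hint2 : Integrable (fun η : Conf d => ind (η a) * (1 - ind (η x))) μ :=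
      integrable_bdd hμ.1 ((measurable_ind a).mul (measurable_const.sub (measurable_ind x))) 1
        (fun η => by cases h1 : η a <;> cases h2 : η x <;> norm_num [ind, h1, h2])
    have hGAeq : (fun η : Conf d => GA p a η x)
        = fun η => p (a - x) * (ind (η x) * (1 - ind (η a)))
            - p (x - a) * (ind (η a) * (1 - ind (η x))) := by
      funext η; unfold GA; rw [if_neg hx]
    rw [hGAeq, integral_sub (hint1.const_mul _) (hint2.const_mul _),
      integral_const_mul, integral_const_mul, moment2 hα hμ hx, moment2 hα hμ (Ne.symm hx)]

end Station

section Station2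

open scoped ENNReal NNReal

variable {d : ℕ} {p : Zd d → ℝ} {α : Zd d → ℝ} {μ : Measure (Conf d)}

lemma habs3 (c : ℝ) (s t r : Bool) (hc : 0 ≤ c) :
    |c * (ind s * ind t * (1 - ind r))| ≤ c := by
  cases s <;> cases t <;> cases r <;> simp [ind, abs_of_nonneg hc, hc]

lemma summable_or_erase {f : Zd d → ℝ} (hf : Summable f) (a b : Zd d) :
    Summable fun x => if x = a ∨ x = b then 0 else f x := by
  classical
  have h : (fun x => if x = a ∨ x = b then 0 else f x)
      = fun x => if x = b then 0 else (if x = a then 0 else f x) := by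
    funext x; by_cases hxa : x = a <;> by_cases hxb : x = b <;> simp [hxa, hxb]
  rw [h]; exact summable_erase (summable_erase hf a) b

lemma tsum_erase2 {f : Zd d → ℝ} (hf : Summable f) {a b : Zd d} (hab : a ≠ b) :
    ∑' x, (if x = a ∨ x = b then 0 else f x) = (∑' x, f x) - f a - f b := by
  classical
  have h : (fun x => if x = a ∨ x = b then 0 else f x)
      = fun x => if x = b then 0 else (if x = a then 0 else f x) := by
    funext x; by_cases hxa : x = a <;> by_cases hxb : x = b <;> simp [hxa, hxb]
  rw [h, tsum_erase (summable_erase hf a) b, tsum_erase hf a]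
  simp only [if_neg (Ne.symm hab)]

lemma tsum_update2 {f : Zd d → ℝ} (hf : Summable f) {a b : Zd d} (hab : a ≠ b) (A B : ℝ) :
    ∑' x, (if x = a then A else if x = b then B else f x)
      = A + B + ∑' x, (if x = a ∨ x = b then 0 else f x) := by
  classical
  have hsplit : ∀ x, (if x = a then A else if x = b then B else f x)
      = (if x = a then A else 0) + ((if x = b then B else 0)
          + (if x = a ∨ x = b then 0 else f x)) := by
    intro x
    by_cases hxa : x = a
    · simp [hxa, hab]
    · by_cases hxb : x = b <;> simp [hxa, hxb, Ne.symm hab]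
  rw [tsum_congr hsplit,
    Summable.tsum_add (summable_single a A) ((summable_single b B).add (summable_or_erase hf a b)),
    Summable.tsum_add (summable_single b B) (summable_or_erase hf a b), tsum_ite_eq, tsum_ite_eq]
  ring

/-- summand family for the two-point function -/
noncomputable def GAB (p : Zd d → ℝ) (a b : Zd d) (η : Conf d) (x : Zd d) : ℝ :=
  if x = a ∨ x = b then 0 else
    p (a - x) * (ind (η x) * ind (η b) * (1 - ind (η a)))
    + p (b - x) * (ind (η x) * ind (η a) * (1 - ind (η b)))
    - (p (x - a) + p (x - b)) * (ind (η a) * ind (η b) * (1 - ind (η x)))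

lemma gen_fab (hp0 : ∀ z, 0 ≤ p z) (hp : Summable p) {a b : Zd d} (hab : a ≠ b)
    (η : Conf d) :
    gen p (fun η => ind (η a) * ind (η b)) η = ∑' x, GAB p a b η x := by
  classical
  -- summability library
  have hka : Summable fun x : Zd d => p (x - a) * (ind (η a) * ind (η b) * (1 - ind (η x))) :=
    summable_of_abs_le (summable_sub hp a) fun x => habs3 _ _ _ _ (hp0 _)
  have hkb : Summable fun x : Zd d => p (x - b) * (ind (η a) * ind (η b) * (1 - ind (η x))) :=
    summable_of_abs_le (summable_sub hp b) fun x => habs3 _ _ _ _ (hp0 _)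
  have hH1 : Summable fun x : Zd d => p (a - x) * (ind (η x) * ind (η b) * (1 - ind (η a))) :=
    summable_of_abs_le (summable_sub' hp a) fun x => habs3 _ _ _ _ (hp0 _)
  have hH2 : Summable fun x : Zd d => p (b - x) * (ind (η x) * ind (η a) * (1 - ind (η b))) :=
    summable_of_abs_le (summable_sub' hp b) fun x => habs3 _ _ _ _ (hp0 _)
  have hga : Summable fun y : Zd d => p (y - a) * (1 - ind (η y)) := by
    refine summable_of_abs_le (summable_sub hp a) fun y => ?_
    have h : p (y - a) * (1 - ind (η y)) = p (y - a) * (ind true * (1 - ind (η y))) := by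
      simp [ind]
    rw [h]; exact habs_unit _ _ _ (hp0 _)
  have hgb : Summable fun y : Zd d => p (y - b) * (1 - ind (η y)) := by
    refine summable_of_abs_le (summable_sub hp b) fun y => ?_
    have h : p (y - b) * (1 - ind (η y)) = p (y - b) * (ind true * (1 - ind (η y))) := by
      simp [ind]
    rw [h]; exact habs_unit _ _ _ (hp0 _)
  set c : ℝ := ind (η a) * ind (η b) with hc
  set Pa : ℝ := ∑' y, (if y = b then 0 else p (y - a) * (1 - ind (η y))) with hPa
  set Pb : ℝ := ∑' y, (if y = a then 0 else p (y - b) * (1 - ind (η y))) with hPb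
  set Hf : Zd d → ℝ := fun x => p (a - x) * (ind (η x) * ind (η b) * (1 - ind (η a)))
      + p (b - x) * (ind (η x) * ind (η a) * (1 - ind (η b))) with hHf
  have hHs : Summable Hf := hH1.add hH2
  -- inner sums
  have hinner : ∀ x : Zd d,
      (∑' y, p (y - x) * ind (η x) * (1 - ind (η y))
        * (ind (swap η x y a) * ind (swap η x y b) - ind (η a) * ind (η b)))
      = if x = a then -(c * Pa) else if x = b then -(c * Pb) else Hf x := by
    intro x
    by_cases hxa : x = a
    · subst hxa
      rw [if_pos rfl]
      have hptw : ∀ y : Zd d,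
          p (y - x) * ind (η x) * (1 - ind (η y))
            * (ind (swap η x y x) * ind (swap η x y b) - ind (η x) * ind (η b))
          = if y = b then 0 else -(c * (p (y - x) * (1 - ind (η y)))) := by
        intro y
        by_cases hyb : y = b
        · subst hyb
          rw [if_pos rfl]
          have h1 : swap η x y x = η y := by simp [swap]
          have h2 : swap η x y y = η x := by simp [swap, hab, Ne.symm hab]
          rw [h1, h2]
          ring
        · rw [if_neg hyb]
          have h1 : swap η x y x = η y := by simp [swap]
          have h2 : swap η x y b = η b := by
            simp [swap, hab, Ne.symm hab, hyb, Ne.symm hyb]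
          rw [h1, h2, hc]
          cases h3 : η x <;> cases h4 : η y <;> cases h5 : η b <;>
            simp [ind, h3, h4, h5] <;> ring
      rw [tsum_congr hptw]
      have hptw2 : ∀ y : Zd d, (if y = b then 0 else -(c * (p (y - x) * (1 - ind (η y)))))
          = -(c * (if y = b then 0 else p (y - x) * (1 - ind (η y)))) := by
        intro y; by_cases hyb : y = b <;> simp [hyb]
      rw [tsum_congr hptw2, tsum_neg, tsum_mul_left]
    · by_cases hxb : x = b
      · subst hxb
        rw [if_neg hxa, if_pos rfl]
        have hptw : ∀ y : Zd d,
            p (y - x) * ind (η x) * (1 - ind (η y))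
              * (ind (swap η x y a) * ind (swap η x y x) - ind (η a) * ind (η x))
            = if y = a then 0 else -(c * (p (y - x) * (1 - ind (η y)))) := by
          intro y
          by_cases hya : y = a
          · subst hya
            rw [if_pos rfl]
            have h1 : swap η x y y = η x := by simp [swap, hab, Ne.symm hab]
            have h2 : swap η x y x = η y := by simp [swap]
            rw [h1, h2]
            ring
          · rw [if_neg hya]
            have h1 : swap η x y x = η y := by simp [swap]
            have h2 : swap η x y a = η a := by
              simp [swap, hab, Ne.symm hab, hya, Ne.symm hya]
            rw [h1, h2, hc]
            cases h3 : η x <;> cases h4 : η y <;> cases h5 : η a <;>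
              simp [ind, h3, h4, h5] <;> ring
        rw [tsum_congr hptw]
        have hptw2 : ∀ y : Zd d, (if y = a then 0 else -(c * (p (y - x) * (1 - ind (η y)))))
            = -(c * (if y = a then 0 else p (y - x) * (1 - ind (η y)))) := by
          intro y; by_cases hya : y = a <;> simp [hya]
        rw [tsum_congr hptw2, tsum_neg, tsum_mul_left]
      · rw [if_neg hxa, if_neg hxb]
        have hptw : ∀ y : Zd d,
            p (y - x) * ind (η x) * (1 - ind (η y))
              * (ind (swap η x y a) * ind (swap η x y b) - ind (η a) * ind (η b))
            = if y = a then p (a - x) * (ind (η x) * ind (η b) * (1 - ind (η a)))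
              else if y = b then p (b - x) * (ind (η x) * ind (η a) * (1 - ind (η b)))
              else 0 := by
          intro y
          by_cases hya : y = a
          · subst hya
            rw [if_pos rfl]
            have h1 : swap η x y y = η x := by simp [swap, hxa, Ne.symm hxa]
            have h2 : swap η x y b = η b := by simp [swap, hxb, Ne.symm hxb, hab, Ne.symm hab]
            rw [h1, h2]
            cases h3 : η x <;> cases h4 : η y <;> cases h5 : η b <;>
              simp [ind, h3, h4, h5] <;> ring
          · by_cases hyb : y = b
            · subst hyb
              rw [if_neg hya, if_pos rfl]
              have h1 : swap η x y y = η x := by simp [swap, hxb, Ne.symm hxb]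
              have h2 : swap η x y a = η a := by simp [swap, hxa, Ne.symm hxa, hab, Ne.symm hab]
              rw [h1, h2]
              cases h3 : η x <;> cases h4 : η y <;> cases h5 : η a <;>
                simp [ind, h3, h4, h5] <;> ring
            · rw [if_neg hya, if_neg hyb]
              have h1 : swap η x y a = η a := by simp [swap, hxa, Ne.symm hxa, hya, Ne.symm hya]
              have h2 : swap η x y b = η b := by simp [swap, hxb, Ne.symm hxb, hyb, Ne.symm hyb]
              rw [h1, h2]
              ring
        rw [tsum_congr hptw, tsum_pair hab]
  -- outer sum
  have hgen : gen p (fun η => ind (η a) * ind (η b)) η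
      = ∑' x, (if x = a then -(c * Pa) else if x = b then -(c * Pb) else Hf x) := by
    unfold gen
    exact tsum_congr hinner
  rw [hgen, tsum_update2 hHs hab]
  -- right-hand side
  have hGAB : ∀ x, GAB p a b η x
      = (if x = a ∨ x = b then 0 else Hf x)
        - ((if x = a ∨ x = b then 0 else p (x - a) * (ind (η a) * ind (η b) * (1 - ind (η x))))
          + (if x = a ∨ x = b then 0 else p (x - b) * (ind (η a) * ind (η b) * (1 - ind (η x))))) := by
    intro x
    unfold GAB
    by_cases hx : x = a ∨ x = b
    · simp [hx]
    · simp only [if_neg hx, hHf]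
      ring
  rw [tsum_congr hGAB,
    Summable.tsum_sub (summable_or_erase hHs a b) ((summable_or_erase hka a b).add (summable_or_erase hkb a b)),
    Summable.tsum_add (summable_or_erase hka a b) (summable_or_erase hkb a b),
    tsum_erase2 hka hab, tsum_erase2 hkb hab]
  -- identify Pa, Pb
  have ePa : c * Pa = (∑' x, p (x - a) * (c * (1 - ind (η x))))
      - p (b - a) * (c * (1 - ind (η b))) := by
    have h2 : Pa = (∑' y, p (y - a) * (1 - ind (η y))) - p (b - a) * (1 - ind (η b)) := by
      rw [hPa]; exact tsum_erase hga b
    have h3 : (∑' x, p (x - a) * (c * (1 - ind (η x))))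
        = c * ∑' x, p (x - a) * (1 - ind (η x)) := by
      rw [← tsum_mul_left]; exact tsum_congr fun x => by ring
    rw [h2, h3]; ring
  have ePb : c * Pb = (∑' x, p (x - b) * (c * (1 - ind (η x))))
      - p (a - b) * (c * (1 - ind (η a))) := by
    have h2 : Pb = (∑' y, p (y - b) * (1 - ind (η y))) - p (a - b) * (1 - ind (η a)) := by
      rw [hPb]; exact tsum_erase hgb a
    have h3 : (∑' x, p (x - b) * (c * (1 - ind (η x))))
        = c * ∑' x, p (x - b) * (1 - ind (η x)) := by
      rw [← tsum_mul_left]; exact tsum_congr fun x => by ring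
    rw [h2, h3]; ring
  have ez1 : p (a - a) * (c * (1 - ind (η a))) = 0 := by
    rw [hc]; cases h4 : η a <;> cases h5 : η b <;> simp [ind, h4, h5]
  have ez2 : p (b - b) * (c * (1 - ind (η b))) = 0 := by
    rw [hc]; cases h4 : η a <;> cases h5 : η b <;> simp [ind, h4, h5]
  linarith [ePa, ePb, ez1, ez2]

lemma star2 (hp0 : ∀ z, 0 ≤ p z) (hp1 : ∑' z : Zd d, p z = 1)
    (hα : ∀ x, α x ∈ Set.Ioo (0:ℝ) 1) (hμ : IsProductWith α μ) (hstat : IsStationary p μ)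
    {a b : Zd d} (hab : a ≠ b) :
    ∑' x, (if x = a ∨ x = b then 0
      else p (a - x) * (α x * α b * (1 - α a)) + p (b - x) * (α x * α a * (1 - α b))
        - (p (x - a) + p (x - b)) * (α a * α b * (1 - α x))) = 0 := by
  classical
  haveI := hμ.1
  have hp : Summable p := summable_p hp1
  have hcyl : IsCylinder fun η : Conf d => ind (η a) * ind (η b) :=
    ⟨{a, b}, fun η η' h => by
      show ind (η a) * ind (η b) = ind (η' a) * ind (η' b)
      rw [h a (by simp), h b (by simp)]⟩
  have h0 := hstat _ hcyl
  have hrw : ∫ η, gen p (fun η => ind (η a) * ind (η b)) η ∂μ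
      = ∫ η, (∑' x, GAB p a b η x) ∂μ :=
    integral_congr_ae (Filter.Eventually.of_forall fun η => gen_fab hp0 hp hab η)
  rw [hrw] at h0
  have hmeas : ∀ x, Measurable fun η : Conf d => GAB p a b η x := by
    intro x
    unfold GAB
    by_cases hx : x = a ∨ x = b
    · simp only [if_pos hx]; exact measurable_const
    · simp only [if_neg hx]
      have m1 : Measurable fun η : Conf d => ind (η x) * ind (η b) * (1 - ind (η a)) :=
        ((measurable_ind x).mul (measurable_ind b)).mul (measurable_const.sub (measurable_ind a))
      have m2 : Measurable fun η : Conf d => ind (η x) * ind (η a) * (1 - ind (η b)) :=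
        ((measurable_ind x).mul (measurable_ind a)).mul (measurable_const.sub (measurable_ind b))
      have m3 : Measurable fun η : Conf d => ind (η a) * ind (η b) * (1 - ind (η x)) :=
        ((measurable_ind a).mul (measurable_ind b)).mul (measurable_const.sub (measurable_ind x))
      exact ((measurable_const.mul m1).add (measurable_const.mul m2)).sub
        (measurable_const.mul m3)
  have hbd : ∀ x, ∫⁻ η, ‖GAB p a b η x‖₊ ∂μ
      ≤ ENNReal.ofReal (p (a - x) + p (b - x) + p (x - a) + p (x - b)) := by
    intro x
    have hnorm : ∀ η : Conf d, (‖GAB p a b η x‖₊ : ℝ≥0∞)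
        ≤ ENNReal.ofReal (p (a - x) + p (b - x) + p (x - a) + p (x - b)) := by
      intro η
      rw [← enorm_eq_nnnorm, ← ofReal_norm_eq_enorm]
      apply ENNReal.ofReal_le_ofReal
      rw [Real.norm_eq_abs]
      unfold GAB
      by_cases hx : x = a ∨ x = b
      · rw [if_pos hx, abs_zero]
        have h1 := hp0 (a - x); have h2 := hp0 (b - x)
        have h3 := hp0 (x - a); have h4 := hp0 (x - b)
        linarith
      · rw [if_neg hx]
        have h1 := habs3 (p (a - x)) (η x) (η b) (η a) (hp0 _)
        have h2 := habs3 (p (b - x)) (η x) (η a) (η b) (hp0 _)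
        have h3 := habs3 (p (x - a)) (η a) (η b) (η x) (hp0 _)
        have h4 := habs3 (p (x - b)) (η a) (η b) (η x) (hp0 _)
        have e1 : (p (x - a) + p (x - b)) * (ind (η a) * ind (η b) * (1 - ind (η x)))
            = p (x - a) * (ind (η a) * ind (η b) * (1 - ind (η x)))
              + p (x - b) * (ind (η a) * ind (η b) * (1 - ind (η x))) := by ring
        rw [e1]
        have t1 := abs_add_le (p (a - x) * (ind (η x) * ind (η b) * (1 - ind (η a))))
          (p (b - x) * (ind (η x) * ind (η a) * (1 - ind (η b))))
        have t2 := abs_add_le (p (a - x) * (ind (η x) * ind (η b) * (1 - ind (η a)))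
            + p (b - x) * (ind (η x) * ind (η a) * (1 - ind (η b))))
          (-(p (x - a) * (ind (η a) * ind (η b) * (1 - ind (η x)))
            + p (x - b) * (ind (η a) * ind (η b) * (1 - ind (η x)))))
        rw [abs_neg] at t2
        have t3 := abs_add_le (p (x - a) * (ind (η a) * ind (η b) * (1 - ind (η x))))
          (p (x - b) * (ind (η a) * ind (η b) * (1 - ind (η x))))
        have e2 : p (a - x) * (ind (η x) * ind (η b) * (1 - ind (η a)))
            + p (b - x) * (ind (η x) * ind (η a) * (1 - ind (η b)))
            + -(p (x - a) * (ind (η a) * ind (η b) * (1 - ind (η x)))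
              + p (x - b) * (ind (η a) * ind (η b) * (1 - ind (η x))))
            = p (a - x) * (ind (η x) * ind (η b) * (1 - ind (η a)))
              + p (b - x) * (ind (η x) * ind (η a) * (1 - ind (η b)))
              - (p (x - a) * (ind (η a) * ind (η b) * (1 - ind (η x)))
                + p (x - b) * (ind (η a) * ind (η b) * (1 - ind (η x)))) := by ring
        rw [e2] at t2
        linarith
    calc ∫⁻ η, ‖GAB p a b η x‖₊ ∂μ
        ≤ ∫⁻ _, ENNReal.ofReal (p (a - x) + p (b - x) + p (x - a) + p (x - b)) ∂μ :=
          lintegral_mono hnorm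
      _ = ENNReal.ofReal (p (a - x) + p (b - x) + p (x - a) + p (x - b)) := by
          rw [lintegral_const, measure_univ, mul_one]
  have htop : (∑' x, ∫⁻ η, ‖GAB p a b η x‖₊ ∂μ) ≠ ⊤ := by
    have hsum : Summable fun x : Zd d => p (a - x) + p (b - x) + p (x - a) + p (x - b) :=
      (((summable_sub' hp a).add (summable_sub' hp b)).add (summable_sub hp a)).add
        (summable_sub hp b)
    have hnn : ∀ x : Zd d, 0 ≤ p (a - x) + p (b - x) + p (x - a) + p (x - b) := fun x => by
      have h1 := hp0 (a - x); have h2 := hp0 (b - x)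
      have h3 := hp0 (x - a); have h4 := hp0 (x - b)
      linarith
    have hle : (∑' x, ∫⁻ η, ‖GAB p a b η x‖₊ ∂μ)
        ≤ ∑' x : Zd d, ENNReal.ofReal (p (a - x) + p (b - x) + p (x - a) + p (x - b)) :=
      ENNReal.tsum_le_tsum hbd
    refine ne_top_of_le_ne_top ?_ hle
    rw [← ENNReal.ofReal_tsum_of_nonneg hnn hsum]
    exact ENNReal.ofReal_ne_top
  rw [integral_tsum (fun x => (hmeas x).aestronglyMeasurable) htop] at h0
  calc ∑' x, (if x = a ∨ x = b then 0
        else p (a - x) * (α x * α b * (1 - α a)) + p (b - x) * (α x * α a * (1 - α b))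
          - (p (x - a) + p (x - b)) * (α a * α b * (1 - α x)))
      = ∑' x, ∫ η, GAB p a b η x ∂μ := ?_
    _ = 0 := h0
  refine tsum_congr fun x => ?_
  by_cases hx : x = a ∨ x = b
  · rw [if_pos hx]
    have : (fun η : Conf d => GAB p a b η x) = fun _ => 0 := by
      funext η; unfold GAB; rw [if_pos hx]
    rw [this, integral_const]
    simp
  · rw [if_neg hx]
    push_neg at hx
    obtain ⟨hxa, hxb⟩ := hx
    have hint1 : Integrable (fun η : Conf d => ind (η x) * ind (η b) * (1 - ind (η a))) μ :=
      integrable_bdd hμ.1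
        (((measurable_ind x).mul (measurable_ind b)).mul (measurable_const.sub (measurable_ind a))) 1
        (fun η => by cases h1 : η x <;> cases h2 : η b <;> cases h3 : η a <;>
          norm_num [ind, h1, h2, h3])
    have hint2 : Integrable (fun η : Conf d => ind (η x) * ind (η a) * (1 - ind (η b))) μ :=
      integrable_bdd hμ.1
        (((measurable_ind x).mul (measurable_ind a)).mul (measurable_const.sub (measurable_ind b))) 1
        (fun η => by cases h1 : η x <;> cases h2 : η a <;> cases h3 : η b <;>
          norm_num [ind, h1, h2, h3])
    have hint3 : Integrable (fun η : Conf d => ind (η a) * ind (η b) * (1 - ind (η x))) μ :=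
      integrable_bdd hμ.1
        (((measurable_ind a).mul (measurable_ind b)).mul (measurable_const.sub (measurable_ind x))) 1
        (fun η => by cases h1 : η a <;> cases h2 : η b <;> cases h3 : η x <;>
          norm_num [ind, h1, h2, h3])
    have hGABeq : (fun η : Conf d => GAB p a b η x)
        = fun η => p (a - x) * (ind (η x) * ind (η b) * (1 - ind (η a)))
            + p (b - x) * (ind (η x) * ind (η a) * (1 - ind (η b)))
            - (p (x - a) + p (x - b)) * (ind (η a) * ind (η b) * (1 - ind (η x))) := by
      funext η; unfold GAB; rw [if_neg (by push_neg; exact ⟨hxa, hxb⟩)]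
    have hsum12 : Integrable (fun η : Conf d =>
        p (a - x) * (ind (η x) * ind (η b) * (1 - ind (η a)))
          + p (b - x) * (ind (η x) * ind (η a) * (1 - ind (η b)))) μ :=
      (hint1.const_mul _).add (hint2.const_mul _)
    rw [hGABeq,
      integral_sub hsum12 (hint3.const_mul _),
      integral_add (hint1.const_mul _) (hint2.const_mul _),
      integral_const_mul, integral_const_mul, integral_const_mul,
      moment3 hα hμ hxb hxa (Ne.symm hab),
      moment3 hα hμ hxa hxb hab,
      moment3 hα hμ hab (Ne.symm hxa) (Ne.symm hxb)]

lemma pairF (hp0 : ∀ z, 0 ≤ p z) (hp1 : ∑' z : Zd d, p z = 1)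
    (hα : ∀ x, α x ∈ Set.Ioo (0:ℝ) 1) (hμ : IsProductWith α μ) (hstat : IsStationary p μ)
    {a b : Zd d} (hab : a ≠ b) :
    (α a - α b) * (p (a - b) * (α b * (1 - α a)) - p (b - a) * (α a * (1 - α b))) = 0 := by
  classical
  have hp : Summable p := summable_p hp1
  have hbound01 : ∀ s t : Zd d, 0 ≤ α s * (1 - α t) ∧ α s * (1 - α t) ≤ 1 := by
    intro s t
    have h1 := (hα s).1; have h2 := (hα s).2
    have h3 := (hα t).1; have h4 := (hα t).2
    constructor <;> nlinarith
  have hta : Summable fun x : Zd d => p (a - x) * (α x * (1 - α a))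
      - p (x - a) * (α a * (1 - α x)) := by
    refine summable_of_abs_le ((summable_sub' hp a).add (summable_sub hp a)) fun x => ?_
    have h1 : |p (a - x) * (α x * (1 - α a))| ≤ p (a - x) := by
      rw [abs_mul, abs_of_nonneg (hp0 _), abs_of_nonneg (hbound01 x a).1]
      nlinarith [(hbound01 x a).2, hp0 (a - x)]
    have h2 : |p (x - a) * (α a * (1 - α x))| ≤ p (x - a) := by
      rw [abs_mul, abs_of_nonneg (hp0 _), abs_of_nonneg (hbound01 a x).1]
      nlinarith [(hbound01 a x).2, hp0 (x - a)]
    calc |p (a - x) * (α x * (1 - α a)) - p (x - a) * (α a * (1 - α x))|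
        ≤ |p (a - x) * (α x * (1 - α a))| + |p (x - a) * (α a * (1 - α x))| := abs_sub _ _
      _ ≤ p (a - x) + p (x - a) := add_le_add h1 h2
  have htb : Summable fun x : Zd d => p (b - x) * (α x * (1 - α b))
      - p (x - b) * (α b * (1 - α x)) := by
    refine summable_of_abs_le ((summable_sub' hp b).add (summable_sub hp b)) fun x => ?_
    have h1 : |p (b - x) * (α x * (1 - α b))| ≤ p (b - x) := by
      rw [abs_mul, abs_of_nonneg (hp0 _), abs_of_nonneg (hbound01 x b).1]
      nlinarith [(hbound01 x b).2, hp0 (b - x)]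
    have h2 : |p (x - b) * (α b * (1 - α x))| ≤ p (x - b) := by
      rw [abs_mul, abs_of_nonneg (hp0 _), abs_of_nonneg (hbound01 b x).1]
      nlinarith [(hbound01 b x).2, hp0 (x - b)]
    calc |p (b - x) * (α x * (1 - α b)) - p (x - b) * (α b * (1 - α x))|
        ≤ |p (b - x) * (α x * (1 - α b))| + |p (x - b) * (α b * (1 - α x))| := abs_sub _ _
      _ ≤ p (b - x) + p (x - b) := add_le_add h1 h2
  -- sums of the erased versions
  have hs1a := star1 hp0 hp1 hα hμ hstat a
  have hs1b := star1 hp0 hp1 hα hμ hstat b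
  have hEa : ∑' x, (if x = a ∨ x = b then 0
      else p (a - x) * (α x * (1 - α a)) - p (x - a) * (α a * (1 - α x)))
      = -(p (a - b) * (α b * (1 - α a)) - p (b - a) * (α a * (1 - α b))) := by
    have h1 := tsum_erase2 hta hab
    have h2 := tsum_erase hta a
    rw [h2] at hs1a
    rw [h1]
    have e0 : p (a - a) * (α a * (1 - α a)) - p (a - a) * (α a * (1 - α a)) = 0 := by ring
    linarith [hs1a]
  have hEb : ∑' x, (if x = a ∨ x = b then 0
      else p (b - x) * (α x * (1 - α b)) - p (x - b) * (α b * (1 - α x)))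
      = -(p (b - a) * (α a * (1 - α b)) - p (a - b) * (α b * (1 - α a))) := by
    have horder : (fun x => if x = b ∨ x = a then 0
        else p (b - x) * (α x * (1 - α b)) - p (x - b) * (α b * (1 - α x)))
        = fun x => if x = a ∨ x = b then 0
          else p (b - x) * (α x * (1 - α b)) - p (x - b) * (α b * (1 - α x)) := by
      funext x; by_cases h1 : x = a <;> by_cases h2 : x = b <;> simp [h1, h2]
    have h1 := tsum_erase2 htb (Ne.symm hab)
    rw [horder] at h1
    have h2 := tsum_erase htb b
    rw [h2] at hs1b
    rw [h1]
    linarith [hs1b]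
  have hsplit : ∀ x, (if x = a ∨ x = b then 0
      else p (a - x) * (α x * α b * (1 - α a)) + p (b - x) * (α x * α a * (1 - α b))
        - (p (x - a) + p (x - b)) * (α a * α b * (1 - α x)))
      = α b * (if x = a ∨ x = b then 0
          else p (a - x) * (α x * (1 - α a)) - p (x - a) * (α a * (1 - α x)))
        + α a * (if x = a ∨ x = b then 0
          else p (b - x) * (α x * (1 - α b)) - p (x - b) * (α b * (1 - α x))) := by
    intro x
    by_cases hx : x = a ∨ x = b
    · simp [hx]
    · rw [if_neg hx, if_neg hx, if_neg hx]; ring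
  have hst2 := star2 hp0 hp1 hα hμ hstat hab
  rw [tsum_congr hsplit,
    Summable.tsum_add ((summable_or_erase hta a b).mul_left (α b)) ((summable_or_erase htb a b).mul_left (α a)),
    tsum_mul_left, tsum_mul_left, hEa, hEb] at hst2
  nlinarith [hst2]

end Station2

section PiPart

open scoped ENNReal NNReal

variable {d : ℕ} {p : Zd d → ℝ} {α : Zd d → ℝ} {μ : Measure (Conf d)}

lemma pif_pos (hα : ∀ x, α x ∈ Set.Ioo (0:ℝ) 1) (x : Zd d) : 0 < pifun α x :=
  div_pos (hα x).1 (by have := (hα x).2; linarith)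

lemma pif_eq_iff (hα : ∀ x, α x ∈ Set.Ioo (0:ℝ) 1) {x y : Zd d} :
    pifun α x = pifun α y ↔ α x = α y := by
  unfold pifun
  have hx1 : (1:ℝ) - α x ≠ 0 := by have := (hα x).2; intro h; linarith
  have hy1 : (1:ℝ) - α y ≠ 0 := by have := (hα y).2; intro h; linarith
  rw [div_eq_div_iff hx1 hy1]
  constructor
  · intro h; ring_nf at h; linarith
  · intro h; rw [h]

lemma PF1 (hp0 : ∀ z, 0 ≤ p z) (hp1 : ∑' z : Zd d, p z = 1)
    (hα : ∀ x, α x ∈ Set.Ioo (0:ℝ) 1) (hμ : IsProductWith α μ) (hstat : IsStationary p μ)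
    (x t : Zd d) (ht : t ≠ 0) :
    pifun α (x + t) = pifun α x ∨ p t * pifun α x = p (-t) * pifun α (x + t) := by
  have hne : x ≠ x + t := fun h => ht (left_eq_add.mp h)
  have hpair := pairF hp0 hp1 hα hμ hstat hne
  have e1 : x - (x + t) = -t := by abel
  have e2 : x + t - x = t := by abel
  rw [e1, e2] at hpair
  rcases mul_eq_zero.1 hpair with h | h
  · left
    have h' : α x = α (x + t) := by linarith [sub_eq_zero.1 h]
    exact (pif_eq_iff hα).2 h'.symm
  · right
    have hx1 : (1:ℝ) - α x ≠ 0 := by have := (hα x).2; intro hc; linarith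
    have hy1 : (1:ℝ) - α (x + t) ≠ 0 := by have := (hα (x + t)).2; intro hc; linarith
    unfold pifun
    field_simp
    linear_combination -h

end PiPart


noncomputable def Mv {d : ℕ} (α : Zd d → ℝ) (z x : Zd d) : ℝ :=
  if pifun α z = pifun α x then 1 else 0

section Squeeze

open scoped ENNReal NNReal

variable {d : ℕ} {p : Zd d → ℝ} {α : Zd d → ℝ} {μ : Measure (Conf d)}

lemma G2 (hp0 : ∀ z, 0 ≤ p z) (hp1 : ∑' z : Zd d, p z = 1)
    (hα : ∀ x, α x ∈ Set.Ioo (0:ℝ) 1) (hμ : IsProductWith α μ) (hstat : IsStationary p μ)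
    (x : Zd d) :
    ∑' z, (if z = x then 0 else (p (x - z) - p (z - x)) * Mv α z x) = 0 := by
  classical
  have hs1 := star1 hp0 hp1 hα hμ hstat x
  have hax : 0 < α x * (1 - α x) := by nlinarith [(hα x).1, (hα x).2]
  have hptw : ∀ z, (if z = x then 0
      else p (x - z) * (α z * (1 - α x)) - p (z - x) * (α x * (1 - α z)))
      = (α x * (1 - α x)) * (if z = x then 0 else (p (x - z) - p (z - x)) * Mv α z x) := by
    intro z
    by_cases hz : z = x
    · simp [hz]
    · rw [if_neg hz, if_neg hz]
      by_cases hM : pifun α z = pifun α x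
      · have hazx : α z = α x := (pif_eq_iff hα).1 hM
        rw [Mv, if_pos hM, hazx]
        ring
      · have hczx : α z ≠ α x := fun h => hM ((pif_eq_iff hα).2 h)
        have hp2 := pairF hp0 hp1 hα hμ hstat (show z ≠ x from hz)
        have hzz : α z - α x ≠ 0 := sub_ne_zero.2 hczx
        have h3 := (mul_eq_zero.1 hp2).resolve_left hzz
        rw [Mv, if_neg hM, mul_zero, mul_zero]
        linarith [h3]
  rw [tsum_congr hptw, tsum_mul_left] at hs1
  rcases mul_eq_zero.1 hs1 with h | h
  · exact absurd h (ne_of_gt hax)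
  · exact h

lemma am_gm {u v w : ℝ} (hu : 0 ≤ u) (hv : 0 ≤ v) (hw : 0 ≤ w) (h : u * v = w ^ 2) :
    2 * w ≤ u + v := by
  nlinarith [sq_nonneg (u - v), sq_nonneg (u + v)]

lemma sq_sign_le {A B C D : ℝ} (hA : 0 ≤ A) (hB : 0 ≤ B) (hC : 0 ≤ C) (hD : 0 ≤ D)
    (hkey : D * B = C * A) : (A - B) * (C - D) ≤ 0 := by
  have h1 : (A * D) * (B * C) = (B * D) ^ 2 := by linear_combination (-(B * D)) * hkey
  have h2 := am_gm (mul_nonneg hA hD) (mul_nonneg hB hC) (mul_nonneg hB hD) h1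
  nlinarith [hkey, h2]

lemma sq_sign_ge {A B C D : ℝ} (hA : 0 ≤ A) (hB : 0 ≤ B) (hC : 0 ≤ C) (hD : 0 ≤ D)
    (hkey : D * A = C * B) : 0 ≤ (A - B) * (C - D) := by
  have h1 : (A * C) * (B * D) = (A * D) ^ 2 := by linear_combination (-(A * D)) * hkey
  have h2 := am_gm (mul_nonneg hA hC) (mul_nonneg hB hD) (mul_nonneg hA hD) h1
  nlinarith [hkey, h2]

lemma claim_sign (hp0 : ∀ z, 0 ≤ p z) (hp1 : ∑' z : Zd d, p z = 1)
    (hα : ∀ x, α x ∈ Set.Ioo (0:ℝ) 1) (hμ : IsProductWith α μ) (hstat : IsStationary p μ)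
    (u x : Zd d)
    (hx : pifun α (x + u) = pifun α x) (w : Zd d) (hw : w ≠ x) :
    0 ≤ (p u - p (-u)) * ((p (x - w) - p (w - x)) * (Mv α (w + u) (x + u) - Mv α w x)) := by
  classical
  have hπx : 0 < pifun α x := pif_pos hα x
  have hπxne : pifun α x ≠ 0 := ne_of_gt hπx
  have hw0 : w - x ≠ 0 := sub_ne_zero.2 hw
  by_cases h1 : pifun α w = pifun α x <;> by_cases h2 : pifun α (w + u) = pifun α (x + u)
  · rw [Mv, Mv, if_pos h1, if_pos h2]; simp
  · -- h1 true, h2 false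
    have hu0 : u ≠ 0 := by
      rintro rfl
      rw [add_zero, add_zero] at h2
      exact h2 h1
    have c1' : p u * pifun α w = p (-u) * pifun α (w + u) := by
      rcases PF1 hp0 hp1 hα hμ hstat w u hu0 with h | h
      · exfalso; apply h2; rw [h, h1]; exact hx.symm
      · exact h
    have earr : (x + u) + (w - x) = w + u := by abel
    have c2' : p (w - x) * pifun α (x + u) = p (x - w) * pifun α (w + u) := by
      rcases PF1 hp0 hp1 hα hμ hstat (x + u) (w - x) hw0 with h | h
      · rw [earr] at h; exact absurd h h2
      · rw [earr] at h
        have e : -(w - x) = x - w := by abel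
        rw [e] at h; exact h
    rw [h1] at c1'
    rw [hx] at c2'
    have h5 : p (w - x) * p (-u) * pifun α x = p (x - w) * p u * pifun α x := by
      calc p (w - x) * p (-u) * pifun α x
          = p (-u) * (p (w - x) * pifun α x) := by ring
        _ = p (-u) * (p (x - w) * pifun α (w + u)) := by rw [c2']
        _ = p (x - w) * (p (-u) * pifun α (w + u)) := by ring
        _ = p (x - w) * (p u * pifun α x) := by rw [← c1']
        _ = p (x - w) * p u * pifun α x := by ring
    have hkey : p (w - x) * p (-u) = p (x - w) * p u := mul_right_cancel₀ hπxne h5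
    have hsd := sq_sign_le (hp0 u) (hp0 (-u)) (hp0 (x - w)) (hp0 (w - x)) hkey
    rw [Mv, Mv, if_pos h1, if_neg h2]
    nlinarith [hsd]
  · -- h1 false, h2 true
    have hu0 : u ≠ 0 := by
      rintro rfl
      rw [add_zero, add_zero] at h2
      exact h1 h2
    have c1' : p u * pifun α w = p (-u) * pifun α (w + u) := by
      rcases PF1 hp0 hp1 hα hμ hstat w u hu0 with h | h
      · exfalso; apply h1; rw [← h, h2]; exact hx
      · exact h
    have c1'' : p u * pifun α w = p (-u) * pifun α x := by
      rw [c1', h2, hx]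
    have earr2 : x + (w - x) = w := by abel
    have c2' : p (w - x) * pifun α x = p (x - w) * pifun α w := by
      rcases PF1 hp0 hp1 hα hμ hstat x (w - x) hw0 with h | h
      · rw [earr2] at h; exact absurd h h1
      · rw [earr2] at h
        have e : -(w - x) = x - w := by abel
        rw [e] at h; exact h
    have h5 : p (w - x) * p u * pifun α x = p (x - w) * p (-u) * pifun α x := by
      calc p (w - x) * p u * pifun α x
          = p u * (p (w - x) * pifun α x) := by ring
        _ = p u * (p (x - w) * pifun α w) := by rw [c2']
        _ = p (x - w) * (p u * pifun α w) := by ring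
        _ = p (x - w) * (p (-u) * pifun α x) := by rw [← c1'']
        _ = p (x - w) * p (-u) * pifun α x := by ring
    have hkey : p (w - x) * p u = p (x - w) * p (-u) := mul_right_cancel₀ hπxne h5
    have hsd := sq_sign_ge (hp0 u) (hp0 (-u)) (hp0 (x - w)) (hp0 (w - x)) hkey
    rw [Mv, Mv, if_neg h1, if_pos h2]
    nlinarith [hsd]
  · rw [Mv, Mv, if_neg h1, if_neg h2]; simp

end Squeeze

section KeyPart

open scoped ENNReal NNReal

variable {d : ℕ} {p : Zd d → ℝ} {α : Zd d → ℝ} {μ : Measure (Conf d)}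

lemma squeeze (hp0 : ∀ z, 0 ≤ p z) (hp1 : ∑' z : Zd d, p z = 1)
    (hα : ∀ x, α x ∈ Set.Ioo (0:ℝ) 1) (hμ : IsProductWith α μ) (hstat : IsStationary p μ)
    (u x : Zd d) (hne : p u ≠ p (-u))
    (hx : pifun α (x + u) = pifun α x) (w : Zd d) (hw : w ≠ x) :
    (p (x - w) - p (w - x)) * (Mv α (w + u) (x + u) - Mv α w x) = 0 := by
  classical
  have hp : Summable p := summable_p hp1
  have hMval : ∀ z y : Zd d, Mv α z y = 0 ∨ Mv α z y = 1 := by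
    intro z y
    unfold Mv
    by_cases h : pifun α z = pifun α y <;> simp [h]
  have habsM : ∀ (z : Zd d) (m : ℝ), m = 0 ∨ m = 1 →
      |(p (x - z) - p (z - x)) * m| ≤ p (x - z) + p (z - x) := by
    intro z m hm
    rcases hm with h | h <;> rw [h]
    · rw [mul_zero, abs_zero]
      have := hp0 (x - z); have := hp0 (z - x); linarith
    · rw [mul_one]
      calc |p (x - z) - p (z - x)| ≤ |p (x - z)| + |p (z - x)| := abs_sub _ _
        _ = p (x - z) + p (z - x) := by
            rw [abs_of_nonneg (hp0 _), abs_of_nonneg (hp0 _)]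
  have hs1 : Summable fun z : Zd d =>
      if z = x then 0 else (p (x - z) - p (z - x)) * Mv α z x := by
    refine summable_of_abs_le ((summable_sub' hp x).add (summable_sub hp x)) fun z => ?_
    by_cases hz : z = x
    · rw [if_pos hz, abs_zero]
      have := hp0 (x - z); have := hp0 (z - x); linarith
    · rw [if_neg hz]; exact habsM z _ (hMval z x)
  have hs2 : Summable fun z : Zd d =>
      if z = x then 0 else (p (x - z) - p (z - x)) * Mv α (z + u) (x + u) := by
    refine summable_of_abs_le ((summable_sub' hp x).add (summable_sub hp x)) fun z => ?_
    by_cases hz : z = x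
    · rw [if_pos hz, abs_zero]
      have := hp0 (x - z); have := hp0 (z - x); linarith
    · rw [if_neg hz]; exact habsM z _ (hMval (z + u) (x + u))
  have hG1 := G2 hp0 hp1 hα hμ hstat x
  have hre : ∑' z, (if z = x then 0
      else (p (x - z) - p (z - x)) * Mv α (z + u) (x + u)) = 0 := by
    have hG2' := G2 hp0 hp1 hα hμ hstat (x + u)
    have he := (Equiv.addRight u).tsum_eq
      (fun z => if z = x + u then 0 else (p (x + u - z) - p (z - (x + u))) * Mv α z (x + u))
    have hpt : ∀ z : Zd d,
        (if (Equiv.addRight u) z = x + u then 0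
          else (p (x + u - (Equiv.addRight u) z) - p ((Equiv.addRight u) z - (x + u)))
            * Mv α ((Equiv.addRight u) z) (x + u))
        = (if z = x then 0 else (p (x - z) - p (z - x)) * Mv α (z + u) (x + u)) := by
      intro z
      have hz1 : (Equiv.addRight u) z = z + u := rfl
      rw [hz1]
      have e1 : x + u - (z + u) = x - z := by abel
      have e2 : z + u - (x + u) = z - x := by abel
      rw [e1, e2]
      by_cases hz : z = x
      · rw [if_pos (by rw [hz]), if_pos hz]
      · rw [if_neg (fun hc => hz (by
          have := add_right_cancel hc
          exact this)), if_neg hz]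
    calc ∑' z, (if z = x then 0 else (p (x - z) - p (z - x)) * Mv α (z + u) (x + u))
        = ∑' z, (if (Equiv.addRight u) z = x + u then 0
            else (p (x + u - (Equiv.addRight u) z) - p ((Equiv.addRight u) z - (x + u)))
              * Mv α ((Equiv.addRight u) z) (x + u)) := (tsum_congr hpt).symm
      _ = ∑' z, (if z = x + u then 0
            else (p (x + u - z) - p (z - (x + u))) * Mv α z (x + u)) := he
      _ = 0 := hG2'
  set F : Zd d → ℝ := fun z => (p u - p (-u)) *
      ((if z = x then 0 else (p (x - z) - p (z - x)) * Mv α (z + u) (x + u))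
        - (if z = x then 0 else (p (x - z) - p (z - x)) * Mv α z x)) with hF
  have hFs : Summable F := ((hs2.sub hs1).mul_left _)
  have hFtsum : ∑' z, F z = 0 := by
    rw [hF]
    rw [tsum_mul_left, Summable.tsum_sub hs2 hs1, hre, hG1]
    ring
  have hFnn : ∀ z, 0 ≤ F z := by
    intro z
    rw [hF]
    by_cases hz : z = x
    · simp [hz]
    · simp only [if_neg hz]
      have hc := claim_sign hp0 hp1 hα hμ hstat u x hx z hz
      nlinarith [hc]
  have hFzero : ∀ z, F z = 0 := by
    intro z
    have hle : F z ≤ ∑' z, F z := hFs.le_tsum z fun j _ => hFnn j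
    rw [hFtsum] at hle
    exact le_antisymm hle (hFnn z)
  have hzw := hFzero w
  rw [hF] at hzw
  simp only [if_neg hw] at hzw
  have hsne : p u - p (-u) ≠ 0 := sub_ne_zero.2 hne
  have h6 := (mul_eq_zero.1 hzw).resolve_left hsne
  linear_combination h6

lemma key (hp0 : ∀ z, 0 ≤ p z) (hp1 : ∑' z : Zd d, p z = 1)
    (hα : ∀ x, α x ∈ Set.Ioo (0:ℝ) 1) (hμ : IsProductWith α μ) (hstat : IsStationary p μ)
    (u : Zd d) (hne : p u ≠ p (-u))
    {x : Zd d} (hx : pifun α (x + u) = pifun α x) (v : Zd d)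
    (hv : 0 < p v ∨ 0 < p (-v)) :
    pifun α ((x + v) + u) = pifun α (x + v) := by
  classical
  by_cases hv0 : v = 0
  · subst hv0
    rw [add_zero]
    exact hx
  by_cases hpv : p v = p (-v)
  · -- symmetric direction: always flat
    have hpvpos : 0 < p v := by
      rcases hv with h | h
      · exact h
      · rw [hpv]; exact h
    have hflat1 : pifun α (x + v) = pifun α x := by
      rcases PF1 hp0 hp1 hα hμ hstat x v hv0 with h | h
      · exact h
      · rw [← hpv] at h
        exact (mul_left_cancel₀ (ne_of_gt hpvpos) h).symm
    have hflat2 : pifun α ((x + u) + v) = pifun α (x + u) := by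
      rcases PF1 hp0 hp1 hα hμ hstat (x + u) v hv0 with h | h
      · exact h
      · rw [← hpv] at h
        exact (mul_left_cancel₀ (ne_of_gt hpvpos) h).symm
    have earr : (x + u) + v = (x + v) + u := by abel
    rw [earr] at hflat2
    rw [hflat2, hx, hflat1]
  · -- asymmetric direction: use the squeeze
    have hwx : x + v ≠ x := fun h => hv0 (left_eq_add.mp h.symm)
    have hsq := squeeze hp0 hp1 hα hμ hstat u x hne hx (x + v) hwx
    have e1 : x - (x + v) = -v := by abel
    have e2 : (x + v) - x = v := by abel
    rw [e1, e2] at hsq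
    have hd : p (-v) - p v ≠ 0 := sub_ne_zero.2 (Ne.symm hpv)
    have hMeq : Mv α ((x + v) + u) (x + u) = Mv α (x + v) x := by
      have := (mul_eq_zero.1 hsq).resolve_left hd
      linarith [this]
    by_cases hM : pifun α (x + v) = pifun α x
    · -- both flat: M = 1
      have hM1 : Mv α (x + v) x = 1 := by rw [Mv, if_pos hM]
      rw [hM1] at hMeq
      have : pifun α ((x + v) + u) = pifun α (x + u) := by
        by_contra hc
        rw [Mv, if_neg hc] at hMeq
        norm_num at hMeq
      rw [this, hx, hM]
    · -- both non-flat
      have hM0 : Mv α (x + v) x = 0 := by rw [Mv, if_neg hM]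
      rw [hM0] at hMeq
      have hMne : pifun α ((x + v) + u) ≠ pifun α (x + u) := by
        intro hc
        rw [Mv, if_pos hc] at hMeq
        norm_num at hMeq
      have cr1 : p v * pifun α x = p (-v) * pifun α (x + v) := by
        rcases PF1 hp0 hp1 hα hμ hstat x v hv0 with h | h
        · exact absurd h hM
        · exact h
      have cr2 : p v * pifun α (x + u) = p (-v) * pifun α ((x + u) + v) := by
        rcases PF1 hp0 hp1 hα hμ hstat (x + u) v hv0 with h | h
        · exfalso
          apply hMne
          have earr : (x + u) + v = (x + v) + u := by abel
          rw [earr] at h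
          exact h
        · exact h
      have earr : (x + u) + v = (x + v) + u := by abel
      rw [earr, hx] at cr2
      -- cr2 : p v * π x = p (-v) * π ((x+v)+u);  cr1 : p v * π x = p (-v) * π (x+v)
      have hpvne : p (-v) ≠ 0 := by
        intro hz
        rw [hz, zero_mul] at cr1
        have : p v = 0 := by
          have hπ := pif_pos hα x
          rcases mul_eq_zero.1 cr1 with h | h
          · exact h
          · exact absurd h (ne_of_gt hπ)
        rw [hz] at hpv
        exact hpv this
      have : p (-v) * pifun α ((x + v) + u) = p (-v) * pifun α (x + v) := by
        rw [← cr2, ← cr1]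
      exact mul_left_cancel₀ hpvne this

end KeyPart

theorem stationary_product_multi_exponent {d k : ℕ} (p : Zd d → ℝ)
    (hp0 : ∀ z, 0 ≤ p z) (hp1 : ∑' z : Zd d, p z = 1)
    (α : Zd d → ℝ) (hα : ∀ x, α x ∈ Set.Ioo (0 : ℝ) 1)
    (μ : Measure (Conf d)) (hμ : IsProductWith α μ) (hstat : IsStationary p μ)
    (u : Fin k → Zd d) (hu : ∀ i, 0 < p (u i))
    (lam : Fin k → ℝ)
    (hlam : ∀ i, (0 < p (-(u i)) → lam i = p (u i) / p (-(u i))) ∧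
                 (p (-(u i)) = 0 → lam i = 1)) :
    ∃ ρ : Fin k → ℝ, (∀ i, ρ i = lam i ∨ ρ i = 1) ∧
      ∀ n : Fin k → ℤ,
        pifun α (∑ i, n i • u i) = pifun α 0 * ∏ i, ρ i ^ (n i) := by
  classical
  set ρ : Fin k → ℝ := fun i => if pifun α (u i) = pifun α 0 then 1 else lam i with hρdef
  have hρpos : ∀ i, 0 < ρ i := by
    intro i
    by_cases h : pifun α (u i) = pifun α 0
    · simp [hρdef, h]
    · simp only [hρdef, if_neg h]
      rcases eq_or_lt_of_le (hp0 (-(u i))) with hz | hpos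
      · rw [(hlam i).2 hz.symm]; norm_num
      · rw [(hlam i).1 hpos]; exact div_pos (hu i) hpos
  -- flatness for symmetric directions
  have flat_easy : ∀ i : Fin k, p (u i) = p (-(u i)) →
      ∀ y : Zd d, pifun α (y + u i) = pifun α y := by
    intro i heq y
    by_cases hz : u i = 0
    · rw [hz, add_zero]
    · rcases PF1 hp0 hp1 hα hμ hstat y (u i) hz with h | h
      · exact h
      · rw [← heq] at h
        exact (mul_left_cancel₀ (ne_of_gt (hu i)) h).symm
  -- flatness for one-sided directions
  have flat_zero : ∀ i : Fin k, p (-(u i)) = 0 →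
      ∀ y : Zd d, pifun α (y + u i) = pifun α y := by
    intro i hz0 y
    have hz : u i ≠ 0 := by
      intro h
      rw [h, neg_zero] at hz0
      have h2 := hu i
      rw [h, hz0] at h2
      exact lt_irrefl _ h2
    rcases PF1 hp0 hp1 hα hμ hstat y (u i) hz with h | h
    · exact h
    · exfalso
      rw [hz0, zero_mul] at h
      exact absurd h (ne_of_gt (mul_pos (hu i) (pif_pos hα y)))
  -- propagation of flatness along lattice steps
  have keyprop : ∀ i : Fin k, p (u i) ≠ p (-(u i)) →
      ∀ y : Zd d, pifun α (y + u i) = pifun α y →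
      ∀ (j : Fin k) (m : ℤ), pifun α ((y + m • u j) + u i) = pifun α (y + m • u j) := by
    intro i hne y hy j m
    induction m using Int.induction_on with
    | zero => simpa using hy
    | succ nn ih =>
        have harr : y + ((nn : ℤ) + 1) • u j = (y + (nn : ℤ) • u j) + u j := by
          rw [add_smul, one_smul, ← add_assoc]
        rw [harr]
        exact key hp0 hp1 hα hμ hstat (u i) hne ih (u j) (Or.inl (hu j))
    | pred nn ih =>
        have harr : y + (-(nn : ℤ) - 1) • u j = (y + (-(nn : ℤ)) • u j) + (-(u j)) := by
          have h2 := add_smul (-(nn : ℤ) - 1) 1 (u j)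
          rw [one_smul] at h2
          have h3 : (-(nn : ℤ)) • u j = (-(nn : ℤ) - 1) • u j + u j := by
            rw [← h2]; congr 1; ring
          rw [h3, ← add_assoc, add_assoc, add_neg_cancel, add_zero]
        rw [harr]
        exact key hp0 hp1 hα hμ hstat (u i) hne ih (-(u j))
          (Or.inr (by rw [neg_neg]; exact hu j))
  have keysum : ∀ i : Fin k, p (u i) ≠ p (-(u i)) →
      ∀ y : Zd d, pifun α (y + u i) = pifun α y →
      ∀ (c : Fin k → ℤ), pifun α ((y + ∑ j, c j • u j) + u i)
        = pifun α (y + ∑ j, c j • u j) := by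
    intro i hne y hy c
    suffices h : ∀ t : Finset (Fin k),
        pifun α ((y + ∑ j ∈ t, c j • u j) + u i) = pifun α (y + ∑ j ∈ t, c j • u j) from
      h Finset.univ
    intro t
    induction t using Finset.induction_on with
    | empty => simpa using hy
    | @insert a s ha ih =>
        rw [Finset.sum_insert ha]
        have harr : y + (c a • u a + ∑ j ∈ s, c j • u j)
            = (y + ∑ j ∈ s, c j • u j) + c a • u a := by
          rw [add_comm (c a • u a), ← add_assoc]
        rw [harr]
        exact keyprop i hne _ ih a (c a)
  -- the one-step ratio identity on the lattice
  have ratio : ∀ (i : Fin k) (c : Fin k → ℤ),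
      pifun α ((∑ j, c j • u j) + u i) = ρ i * pifun α (∑ j, c j • u j) := by
    intro i c
    by_cases heasy : p (u i) = p (-(u i))
    · have hfy := flat_easy i heasy
      have h0 : pifun α (u i) = pifun α 0 := by
        have h' := hfy 0; rwa [zero_add] at h'
      have hρ1 : ρ i = 1 := by simp [hρdef, h0]
      rw [hρ1, one_mul]
      exact hfy _
    · rcases eq_or_lt_of_le (hp0 (-(u i))) with hz | hpos
      · have hfy := flat_zero i hz.symm
        have h0 : pifun α (u i) = pifun α 0 := by
          have h' := hfy 0; rwa [zero_add] at h'
        have hρ1 : ρ i = 1 := by simp [hρdef, h0]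
        rw [hρ1, one_mul]
        exact hfy _
      · by_cases h0 : pifun α (u i) = pifun α 0
        · have hρ1 : ρ i = 1 := by simp [hρdef, h0]
          rw [hρ1, one_mul]
          have h0' : pifun α ((0 : Zd d) + u i) = pifun α 0 := by rwa [zero_add]
          have h2 := keysum i heasy 0 h0' c
          rwa [zero_add] at h2
        · have hρl : ρ i = lam i := by simp [hρdef, h0]
          have hnotflat : ¬ pifun α ((∑ j, c j • u j) + u i)
              = pifun α (∑ j, c j • u j) := by
            intro hfl
            apply h0
            have h2 := keysum i heasy _ hfl (fun j => -(c j))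
            have hzero : (∑ j, c j • u j) + (∑ j, (-(c j)) • u j) = 0 := by
              rw [← Finset.sum_add_distrib]
              have hpt : ∀ j : Fin k, c j • u j + (-(c j)) • u j = 0 := fun j => by
                rw [← add_smul]; simp
              rw [Finset.sum_congr rfl fun j _ => hpt j, Finset.sum_const_zero]
            rw [hzero, zero_add] at h2
            exact h2
          have hui0 : u i ≠ 0 := by
            intro h
            rw [h, neg_zero] at heasy
            exact heasy rfl
          rcases PF1 hp0 hp1 hα hμ hstat (∑ j, c j • u j) (u i) hui0 with h | h
          · exact absurd h hnotflat
          · rw [hρl, (hlam i).1 hpos, div_mul_eq_mul_div, eq_div_iff (ne_of_gt hpos)]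
            linear_combination -h
  -- the m-step ratio identity
  have ratioN : ∀ (i : Fin k) (c : Fin k → ℤ) (m : ℤ),
      pifun α ((∑ j, c j • u j) + m • u i)
        = pifun α (∑ j, c j • u j) * ρ i ^ m := by
    intro i c m
    have hshift : ∀ (m' : ℤ), ∑ j, (c j + if j = i then m' else 0) • u j
        = (∑ j, c j • u j) + m' • u i := by
      intro m'
      have hpt : ∀ j : Fin k, (c j + if j = i then m' else 0) • u j
          = c j • u j + (if j = i then m' • u j else 0) := by
        intro j; by_cases hj : j = i <;> simp [hj, add_smul]
      rw [Finset.sum_congr rfl fun j _ => hpt j, Finset.sum_add_distrib,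
        Finset.sum_ite_eq']
      simp
    induction m using Int.induction_on with
    | zero => simp
    | succ nn ih =>
        have hveq := ratio i (fun j => c j + if j = i then (nn : ℤ) else 0)
        rw [hshift (nn : ℤ)] at hveq
        have hstep : ((∑ j, c j • u j) + (nn : ℤ) • u i) + u i
            = (∑ j, c j • u j) + ((nn : ℤ) + 1) • u i := by
          have h2 := add_smul (nn : ℤ) 1 (u i)
          rw [one_smul] at h2
          rw [add_assoc, ← h2]
        rw [hstep, ih] at hveq
        rw [hveq, zpow_add_one₀ (ne_of_gt (hρpos i))]
        ring
    | pred nn ih =>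
        have hveq := ratio i (fun j => c j + if j = i then (-(nn : ℤ) - 1) else 0)
        rw [hshift (-(nn : ℤ) - 1)] at hveq
        have hstep : ((∑ j, c j • u j) + (-(nn : ℤ) - 1) • u i) + u i
            = (∑ j, c j • u j) + (-(nn : ℤ)) • u i := by
          have h2 := add_smul (-(nn : ℤ) - 1) 1 (u i)
          rw [one_smul] at h2
          rw [add_assoc, ← h2]
          congr 2
          ring
        rw [hstep, ih] at hveq
        have hρne : ρ i ≠ 0 := ne_of_gt (hρpos i)
        have hzp : ρ i ^ (-(nn : ℤ)) = ρ i ^ (-(nn : ℤ) - 1) * ρ i := by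
          rw [← zpow_add_one₀ hρne]
          congr 1
          ring
        rw [hzp] at hveq
        have h3 : ρ i * (pifun α (∑ j, c j • u j) * ρ i ^ (-(nn : ℤ) - 1))
            = ρ i * pifun α ((∑ j, c j • u j) + (-(nn : ℤ) - 1) • u i) := by
          linear_combination hveq
        exact (mul_left_cancel₀ hρne h3).symm
  refine ⟨ρ, fun i => ?_, fun n => ?_⟩
  · by_cases h : pifun α (u i) = pifun α 0
    · right; simp [hρdef, h]
    · left; simp [hρdef, h]
  · have main : ∀ t : Finset (Fin k),
        pifun α (∑ j ∈ t, n j • u j) = pifun α 0 * ∏ j ∈ t, ρ j ^ (n j) := by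
      intro t
      induction t using Finset.induction_on with
      | empty => simp
      | @insert a s ha ih =>
          rw [Finset.sum_insert ha, Finset.prod_insert ha]
          have harr : n a • u a + ∑ j ∈ s, n j • u j
              = (∑ j ∈ s, n j • u j) + n a • u a := by
            rw [add_comm]
          rw [harr]
          have hsum : (∑ j, (if j ∈ s then n j else 0) • u j) = ∑ j ∈ s, n j • u j := by
            have hpt : ∀ j : Fin k, (if j ∈ s then n j else 0) • u j
                = (if j ∈ s then n j • u j else 0) := by
              intro j; by_cases hj : j ∈ s <;> simp [hj]
            rw [Finset.sum_congr rfl fun j _ => hpt j, Finset.sum_ite_mem,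
              Finset.univ_inter]
          rw [← hsum, ratioN a _ (n a), hsum, ih]
          ring
    exact main Finset.univ

end ExclusionPaper
end

section
/- For every z ∈ ℤ^d and every integer n ≥ 1, Σ_{u ∈ ℤ^d} |1_{B_n}(u) − 1_{B_n}(u−z)| ≤ 2·(2n+1)^{d−1}·Σ_{j=1}^d |⟨z, v_j⟩|. -/
open Filter Topology

namespace ExclusionPaper

noncomputable def bInd {d : ℕ} (vb : Fin d → Zd d) (n : ℕ) (u : Zd d) : ℝ :=
  if ∀ i, |innerZ u (vb i)| ≤ (n : ℤ) then 1 else 0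

open Finset

/- ### auxiliary lemmas -/

lemma innerZ_self_pos {d : ℕ} {x : Zd d} (hx : x ≠ 0) : 0 < innerZ x x := by
  have h1 : 0 ≤ innerZ x x := Finset.sum_nonneg fun i _ => mul_self_nonneg _
  rcases h1.lt_or_eq with h | h
  · exact h
  · exfalso; apply hx; funext i
    have := (Finset.sum_eq_zero_iff_of_nonneg (fun i _ => mul_self_nonneg (x i))).1 h.symm i
      (Finset.mem_univ i)
    simpa using mul_self_eq_zero.1 this

lemma innerZ_sub_left {d : ℕ} (x y v : Zd d) :
    innerZ (x - y) v = innerZ x v - innerZ y v := by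
  simp [innerZ, sub_mul, Finset.sum_sub_distrib]

lemma phi_inj {d : ℕ} (vb : Fin d → Zd d) (hne : ∀ i, vb i ≠ 0)
    (horth : ∀ i j, i ≠ j → innerZ (vb i) (vb j) = 0) :
    Function.Injective (fun u : Zd d => (fun i => innerZ u (vb i) : Zd d)) := by
  set M : Matrix (Fin d) (Fin d) ℤ := Matrix.of (fun i k => vb i k) with hM
  have hmv : ∀ u : Zd d, M.mulVec u = fun i => innerZ u (vb i) := by
    intro u; funext i
    simp [Matrix.mulVec, dotProduct, innerZ, hM, mul_comm]
  have hdet : M.det ≠ 0 := by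
    have hMT : M * M.transpose = Matrix.diagonal (fun i => innerZ (vb i) (vb i)) := by
      ext i j
      by_cases hij : i = j
      · subst hij; simp [Matrix.mul_apply, hM, innerZ, Matrix.diagonal]
      · simp only [Matrix.mul_apply, hM, Matrix.diagonal, hij, Matrix.of_apply,
          Matrix.transpose_apply, if_false]
        have := horth i j hij
        simpa [innerZ] using this
    have hd2 : M.det * M.det ≠ 0 := by
      have : M.det * M.transpose.det = (∏ i, innerZ (vb i) (vb i)) := by
        rw [← Matrix.det_mul, hMT, Matrix.det_diagonal]
      rw [Matrix.det_transpose] at this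
      rw [this]
      exact Finset.prod_ne_zero_iff.2 fun i _ => (innerZ_self_pos (hne i)).ne'
    exact fun h => hd2 (by rw [h, mul_zero])
  intro u u' huv
  have h0 : M.mulVec u = M.mulVec u' := by rw [hmv, hmv]; exact huv
  have h1 : M.det • u = M.det • u' := by
    have := congrArg (fun w => M.adjugate.mulVec w) h0
    simpa [Matrix.mulVec_mulVec, Matrix.adjugate_mul, Matrix.smul_mulVec,
      Matrix.one_mulVec] using this
  funext i
  have := congrFun h1 i
  simp only [Pi.smul_apply, smul_eq_mul] at this
  exact mul_left_cancel₀ hdet this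

/- ### 1-dimensional symmetric difference -/

noncomputable def symmD (n : ℕ) (b : ℤ) : Finset ℤ :=
  (Icc (-(n:ℤ)) n \ Icc (b - n) (b + n)) ∪ (Icc (b - n) (b + n) \ Icc (-(n:ℤ)) n)

lemma Icc_inter_Icc' (a b c d : ℤ) : Icc a b ∩ Icc c d = Icc (max a c) (min b d) := by
  ext x; simp only [Finset.mem_inter, Finset.mem_Icc]; omega

lemma mem_symmD {n : ℕ} {b x : ℤ} (h : ¬ ((|x| ≤ (n:ℤ)) ↔ (|x - b| ≤ (n:ℤ)))) :
    x ∈ symmD n b := by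
  rw [abs_le, abs_le] at h
  simp only [symmD, Finset.mem_union, Finset.mem_sdiff, Finset.mem_Icc]
  omega

lemma card_symmD_le (n : ℕ) (b : ℤ) : (symmD n b).card ≤ 2 * b.natAbs := by
  have h1 := Finset.card_sdiff_add_card_inter (Icc (-(n:ℤ)) n) (Icc (b - n) (b + n))
  have h2 := Finset.card_sdiff_add_card_inter (Icc (b - n) (b + n)) (Icc (-(n:ℤ)) n)
  have hc := Finset.card_union_le (Icc (-(n:ℤ)) n \ Icc (b - n) (b + n))
      (Icc (b - n) (b + n) \ Icc (-(n:ℤ)) n)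
  rw [Icc_inter_Icc'] at h1 h2
  simp only [Int.card_Icc] at h1 h2
  simp only [symmD]
  omega

/- ### box indicator and interpolation -/

noncomputable def gbox (d n : ℕ) (w : Zd d) : ℝ :=
  if ∀ i, |w i| ≤ (n : ℤ) then 1 else 0

lemma gbox_nonneg (d n : ℕ) (w : Zd d) : 0 ≤ gbox d n w := by
  unfold gbox; split <;> norm_num

lemma abs_gbox_sub_le_one (d n : ℕ) (w w' : Zd d) : |gbox d n w - gbox d n w'| ≤ 1 := by
  unfold gbox; split <;> split <;> norm_num

def stepv {d : ℕ} (a : Zd d) (k : ℕ) (w : Zd d) : Zd d :=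
  fun i => if (i : ℕ) < k then w i - a i else w i

lemma stepv_zero {d : ℕ} (a : Zd d) (w : Zd d) : stepv a 0 w = w := by
  funext i; simp [stepv]

lemma stepv_top {d : ℕ} (a : Zd d) (w : Zd d) : stepv a d w = w - a := by
  funext i; simp [stepv, i.isLt]

lemma stepv_succ_ne {d : ℕ} (a : Zd d) (k : ℕ) (w : Zd d) {i : Fin d}
    (hik : (i : ℕ) ≠ k) : stepv a (k + 1) w i = stepv a k w i := by
  simp only [stepv, Nat.lt_succ_iff_lt_or_eq, hik, or_false]

lemma stepv_self {d : ℕ} (a : Zd d) (w : Zd d) {k : Fin d} :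
    stepv a (k : ℕ) w k = w k := by
  simp [stepv]

lemma stepv_succ_self {d : ℕ} (a : Zd d) (w : Zd d) {k : Fin d} :
    stepv a ((k : ℕ) + 1) w k = w k - a k := by
  simp [stepv]

/- support finset for step k -/

noncomputable def stepFin {d : ℕ} (n : ℕ) (a : Zd d) (k : Fin d) : Finset (Zd d) :=
  Fintype.piFinset (fun i =>
    if (i : ℕ) < (k : ℕ) then Icc (a i - n) (a i + n)
    else if i = k then symmD n (a k)
    else Icc (-(n:ℤ)) n)

lemma stepv_support {d n : ℕ} (a : Zd d) (k : Fin d) (w : Zd d)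
    (h : |gbox d n (stepv a k w) - gbox d n (stepv a ((k : ℕ) + 1) w)| ≠ 0) :
    w ∈ stepFin n a k := by
  have hg : gbox d n (stepv a k w) ≠ gbox d n (stepv a ((k : ℕ) + 1) w) := by
    intro he; exact h (by rw [he, sub_self, abs_zero])
  by_cases h1 : ∀ i, |stepv a (k : ℕ) w i| ≤ (n : ℤ)
  · by_cases h2 : ∀ i, |stepv a ((k : ℕ) + 1) w i| ≤ (n : ℤ)
    · exact absurd (by unfold gbox; rw [if_pos h1, if_pos h2]) hg
    · -- h1 holds, h2 fails
      have hk : ¬ ((|w k| ≤ (n : ℤ)) ↔ (|w k - a k| ≤ (n : ℤ))) := by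
        intro hiff
        apply h2
        intro i
        by_cases hik : (i : ℕ) = (k : ℕ)
        · have : i = k := Fin.ext hik
          subst this
          rw [stepv_succ_self]
          exact hiff.1 (by have := h1 i; rwa [stepv_self] at this)
        · rw [stepv_succ_ne a _ w hik]; exact h1 i
      rw [stepFin, Fintype.mem_piFinset]
      intro i
      by_cases hik : i = k
      · subst hik
        simp only [lt_irrefl, if_neg (lt_irrefl _), if_pos rfl]
        exact mem_symmD hk
      · have hikn : (i : ℕ) ≠ (k : ℕ) := fun hc => hik (Fin.ext hc)
        have := h1 i
        by_cases hlt : (i : ℕ) < (k : ℕ)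
        · rw [if_pos hlt]
          simp only [stepv, if_pos hlt] at this
          rw [Finset.mem_Icc]
          have := abs_le.1 this
          omega
        · rw [if_neg hlt, if_neg hik, Finset.mem_Icc]
          simp only [stepv, if_neg hlt] at this
          have := abs_le.1 this
          omega
  · by_cases h2 : ∀ i, |stepv a ((k : ℕ) + 1) w i| ≤ (n : ℤ)
    · -- h2 holds, h1 fails
      have hk : ¬ ((|w k| ≤ (n : ℤ)) ↔ (|w k - a k| ≤ (n : ℤ))) := by
        intro hiff
        apply h1
        intro i
        by_cases hik : (i : ℕ) = (k : ℕ)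
        · have : i = k := Fin.ext hik
          subst this
          rw [stepv_self]
          exact hiff.2 (by have := h2 i; rwa [stepv_succ_self] at this)
        · rw [← stepv_succ_ne a _ w hik]; exact h2 i
      rw [stepFin, Fintype.mem_piFinset]
      intro i
      by_cases hik : i = k
      · subst hik
        simp only [if_neg (lt_irrefl _), if_pos rfl]
        exact mem_symmD hk
      · have hikn : (i : ℕ) ≠ (k : ℕ) := fun hc => hik (Fin.ext hc)
        have := h2 i
        rw [stepv_succ_ne a _ w hikn] at this
        by_cases hlt : (i : ℕ) < (k : ℕ)
        · rw [if_pos hlt]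
          simp only [stepv, if_pos hlt] at this
          rw [Finset.mem_Icc]
          have := abs_le.1 this
          omega
        · rw [if_neg hlt, if_neg hik, Finset.mem_Icc]
          simp only [stepv, if_neg hlt] at this
          have := abs_le.1 this
          omega
    · exact absurd (by unfold gbox; rw [if_neg h1, if_neg h2]) hg

lemma card_stepFin_le {d n : ℕ} (a : Zd d) (k : Fin d) :
    (stepFin n a k).card ≤ 2 * (a k).natAbs * (2 * n + 1) ^ (d - 1) := by
  classical
  set S : Fin d → Finset ℤ := (fun i =>
    if (i : ℕ) < (k : ℕ) then Icc (a i - n) (a i + n)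
    else if i = k then symmD n (a k)
    else Icc (-(n:ℤ)) n) with hS
  have hcard : (stepFin n a k).card = ∏ i, (S i).card := by
    simp [stepFin, Fintype.card_piFinset, hS]
  rw [hcard, ← Finset.mul_prod_erase Finset.univ _ (Finset.mem_univ k)]
  have hSk : (S k).card ≤ 2 * (a k).natAbs := by
    simp only [hS, lt_irrefl, if_neg (lt_irrefl _), if_pos rfl]
    exact card_symmD_le n (a k)
  have hrest : ∏ i ∈ Finset.univ.erase k, (S i).card = (2 * n + 1) ^ (d - 1) := by
    have h1 : ∀ i ∈ Finset.univ.erase k, (S i).card = 2 * n + 1 := by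
      intro i hi
      have hik : i ≠ k := Finset.ne_of_mem_erase hi
      simp only [hS]
      by_cases hlt : (i : ℕ) < (k : ℕ)
      · rw [if_pos hlt, Int.card_Icc]; omega
      · rw [if_neg hlt, if_neg hik, Int.card_Icc]; omega
    rw [Finset.prod_congr rfl h1, Finset.prod_const,
      Finset.card_erase_of_mem (Finset.mem_univ k), Finset.card_univ, Fintype.card_fin]
  rw [hrest]
  exact Nat.mul_le_mul_right _ hSk

lemma stepv_summable {d n : ℕ} (a : Zd d) (k : Fin d) :
    Summable (fun w : Zd d => |gbox d n (stepv a k w) - gbox d n (stepv a ((k : ℕ) + 1) w)|) := by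
  apply summable_of_ne_finset_zero (s := stepFin n a k)
  intro w hw
  by_contra h
  exact hw (stepv_support a k w h)

lemma stepv_tsum_le {d n : ℕ} (a : Zd d) (k : Fin d) :
    ∑' w : Zd d, |gbox d n (stepv a k w) - gbox d n (stepv a ((k : ℕ) + 1) w)| ≤
      2 * |((a k : ℤ) : ℝ)| * (2 * (n : ℝ) + 1) ^ (d - 1) := by
  rw [tsum_eq_sum (s := stepFin n a k) (fun w hw => by
    by_contra h; exact hw (stepv_support a k w h))]
  calc ∑ w ∈ stepFin n a k, |gbox d n (stepv a k w) - gbox d n (stepv a ((k : ℕ) + 1) w)|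
      ≤ ∑ _w ∈ stepFin n a k, (1 : ℝ) :=
        Finset.sum_le_sum fun w _ => abs_gbox_sub_le_one d n _ _
    _ = ((stepFin n a k).card : ℝ) := by simp
    _ ≤ ((2 * (a k).natAbs * (2 * n + 1) ^ (d - 1) : ℕ) : ℝ) := by
        exact_mod_cast card_stepFin_le a k
    _ = 2 * |((a k : ℤ) : ℝ)| * (2 * (n : ℝ) + 1) ^ (d - 1) := by
        push_cast [Nat.cast_natAbs]
        ring


theorem indicator_difference_bound {d : ℕ} (vb : Fin d → Zd d)
    (hne : ∀ i, vb i ≠ 0)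
    (horth : ∀ i j, i ≠ j → innerZ (vb i) (vb j) = 0)
    (n : ℕ) (hn : 1 ≤ n) (z : Zd d) :
    ∑' u : Zd d, |bInd vb n u - bInd vb n (u - z)| ≤
      2 * (2 * (n : ℝ) + 1) ^ (d - 1) * ∑ j, |((innerZ z (vb j) : ℤ) : ℝ)| := by
  classical
  set a : Zd d := fun j => innerZ z (vb j) with ha
  set Φ : Zd d → Zd d := fun u => fun i => innerZ u (vb i) with hΦ
  have hinj : Function.Injective Φ := phi_inj vb hne horth
  have hFG : ∀ u, |bInd vb n u - bInd vb n (u - z)| =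
      |gbox d n (Φ u) - gbox d n (Φ u - a)| := by
    intro u
    have h1 : bInd vb n u = gbox d n (Φ u) := rfl
    have h2 : Φ (u - z) = Φ u - a := by
      funext i
      simp only [hΦ, ha, Pi.sub_apply, innerZ_sub_left]
    have h3 : bInd vb n (u - z) = gbox d n (Φ u - a) := by
      rw [← h2]; rfl
    rw [h1, h3]
  set Bfin : Finset (Zd d) :=
    Fintype.piFinset (fun i => Icc (-(n:ℤ)) n ∪ Icc (a i - n) (a i + n)) with hB
  have hGsupp : ∀ w : Zd d, |gbox d n w - gbox d n (w - a)| ≠ 0 → w ∈ Bfin := by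
    intro w h
    have hor : (∀ i, |w i| ≤ (n : ℤ)) ∨ (∀ i, |(w - a) i| ≤ (n : ℤ)) := by
      by_contra hc
      obtain ⟨hc1, hc2⟩ := not_or.1 hc
      apply h
      unfold gbox
      rw [if_neg hc1, if_neg hc2, sub_self, abs_zero]
    rw [hB, Fintype.mem_piFinset]
    intro i
    rcases hor with h' | h'
    · exact Finset.mem_union_left _ (Finset.mem_Icc.2 (by have := abs_le.1 (h' i); omega))
    · refine Finset.mem_union_right _ (Finset.mem_Icc.2 ?_)
      have := abs_le.1 (h' i)
      simp only [Pi.sub_apply] at this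
      omega
  have hGsum : Summable (fun w : Zd d => |gbox d n w - gbox d n (w - a)|) := by
    apply summable_of_ne_finset_zero (s := Bfin)
    intro w hw
    by_contra hcon
    exact hw (hGsupp w hcon)
  have hFsum : Summable (fun u : Zd d => |bInd vb n u - bInd vb n (u - z)|) := by
    have hfin : (Φ ⁻¹' ↑Bfin).Finite :=
      Set.Finite.preimage (Function.Injective.injOn hinj) (Bfin.finite_toSet)
    apply summable_of_ne_finset_zero (s := hfin.toFinset)
    intro u hu
    by_contra hcon
    rw [hFG u] at hcon
    exact hu (hfin.mem_toFinset.2 (hGsupp (Φ u) hcon))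
  have stepA : ∑' u : Zd d, |bInd vb n u - bInd vb n (u - z)| ≤
      ∑' w : Zd d, |gbox d n w - gbox d n (w - a)| := by
    exact Summable.tsum_le_tsum_of_inj Φ hinj (fun c _ => abs_nonneg _)
      (fun u => le_of_eq (hFG u)) hFsum hGsum
  have hpt : ∀ w : Zd d, |gbox d n w - gbox d n (w - a)| ≤
      ∑ k : Fin d, |gbox d n (stepv a (k : ℕ) w) - gbox d n (stepv a ((k : ℕ) + 1) w)| := by
    intro w
    have htel : ∑ k ∈ Finset.range d,
        (gbox d n (stepv a k w) - gbox d n (stepv a (k + 1) w)) =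
        gbox d n w - gbox d n (w - a) := by
      rw [Finset.sum_range_sub' (fun k => gbox d n (stepv a k w)) d, stepv_zero, stepv_top]
    rw [← htel]
    calc |∑ k ∈ Finset.range d, (gbox d n (stepv a k w) - gbox d n (stepv a (k + 1) w))|
        ≤ ∑ k ∈ Finset.range d, |gbox d n (stepv a k w) - gbox d n (stepv a (k + 1) w)| :=
          Finset.abs_sum_le_sum_abs _ _
      _ = ∑ k : Fin d, |gbox d n (stepv a (k : ℕ) w) - gbox d n (stepv a ((k : ℕ) + 1) w)| :=
          (Fin.sum_univ_eq_sum_range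
            (fun k => |gbox d n (stepv a k w) - gbox d n (stepv a (k + 1) w)|) d).symm
  have stepB : ∑' w : Zd d, |gbox d n w - gbox d n (w - a)| ≤
      ∑ k : Fin d, ∑' w : Zd d,
        |gbox d n (stepv a (k : ℕ) w) - gbox d n (stepv a ((k : ℕ) + 1) w)| := by
    rw [← Summable.tsum_finsetSum (fun k _ => stepv_summable a k)]
    exact Summable.tsum_le_tsum hpt hGsum (summable_sum (fun k _ => stepv_summable a k))
  have stepC : ∑ k : Fin d, ∑' w : Zd d,
        |gbox d n (stepv a (k : ℕ) w) - gbox d n (stepv a ((k : ℕ) + 1) w)| ≤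
      ∑ k : Fin d, 2 * |((a k : ℤ) : ℝ)| * (2 * (n : ℝ) + 1) ^ (d - 1) :=
    Finset.sum_le_sum fun k _ => stepv_tsum_le a k
  have hfinal : ∑ k : Fin d, 2 * |((a k : ℤ) : ℝ)| * (2 * (n : ℝ) + 1) ^ (d - 1) =
      2 * (2 * (n : ℝ) + 1) ^ (d - 1) * ∑ j, |((innerZ z (vb j) : ℤ) : ℝ)| := by
    rw [Finset.mul_sum]
    exact Finset.sum_congr rfl fun k _ => by rw [ha]; ring
  linarith [stepA, stepB, stepC, hfinal.le, hfinal.ge]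

end ExclusionPaper
end
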